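/- arXiv:1402.5717 — 3 statements merged into one kernel-verified Lean document; each statement's English description precedes it below -/
import Mathlib

section
/- Fix an integer n ≥ 1 and λ ∈ (0,n). There is a constant C = C(n,λ) > 0 such that every nonnegative Borel function ω on ℝ^{n+1}_+ with ∫_{ℝⁿ} Nω dΛ_λ^{(∞)} ≤ 1 satisfies ω(x,t) ≤ C t^{−λ} for every (x,t) ∈ ℝ^{n+1}_+. -/
open MeasureTheory Filter Metric Set
open scoped ENNReal NNReal Topology

noncomputable section

abbrev XX (n : ℕ) := EuclideanSpace ℝ (Fin n)

/-- λ-dimensional Hausdorff capacity. -/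
def hausCap (n : ℕ) (lam : ℝ) (E : Set (XX n)) : ℝ≥0∞ :=
  ⨅ (c : ℕ → XX n) (r : ℕ → ℝ) (_ : ∀ j, 0 < r j)
    (_ : E ⊆ ⋃ j, Metric.ball (c j) (r j)), ∑' j, ENNReal.ofReal ((r j) ^ lam)

/-- Choquet integral against the Hausdorff capacity. -/
def choquetInt (n : ℕ) (lam : ℝ) (f : XX n → ℝ≥0∞) : ℝ≥0∞ :=
  ∫⁻ t in Set.Ioi (0 : ℝ), hausCap n lam {x | ENNReal.ofReal t < f x}

/-- Nontangential maximal function of a function on the upper half-space. -/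
def ntMax (n : ℕ) (ω : XX n × ℝ → ℝ≥0∞) (x : XX n) : ℝ≥0∞ :=
  ⨆ (q : XX n × ℝ) (_ : 0 < q.2 ∧ dist x q.1 < q.2), ω q

/-- The upper half-space `ℝ^{n+1}_+`. -/
def upperHalf (n : ℕ) : Set (XX n × ℝ) := {q | 0 < q.2}

/-- Admissible weights in the definition of the `FṪ^λ` quasi-norm. -/
def Admissible (n : ℕ) (lam : ℝ) (F : XX n × ℝ → ℂ) (ω : XX n × ℝ → ℝ≥0∞) : Prop :=
  Measurable ω ∧ choquetInt n lam (ntMax n ω) ≤ 1 ∧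
    ∀ q ∈ upperHalf n, ω q = 0 → F q = 0

/-- The `FṪ^λ` quasi-norm. -/
def FTnorm (n : ℕ) (lam : ℝ) (F : XX n × ℝ → ℂ) : ℝ≥0∞ :=
  ⨅ (ω : XX n × ℝ → ℝ≥0∞) (_ : Admissible n lam F ω),
    (∫⁻ q in upperHalf n, ((‖F q‖₊ : ℝ≥0∞) ^ 2 / ω q) * ENNReal.ofReal q.2⁻¹) ^ (1/2 : ℝ)

/-- The tent over the ball `B(xB, rB)`. -/
def tent (n : ℕ) (xB : XX n) (rB : ℝ) : Set (XX n × ℝ) :=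
  {q | 0 < q.2 ∧ Metric.ball q.1 q.2 ⊆ Metric.ball xB rB}

/-- An `FṪ^λ`-atom. -/
def IsTentAtom (n : ℕ) (lam : ℝ) (a : XX n × ℝ → ℂ) : Prop :=
  Measurable a ∧ ∃ (xB : XX n) (rB : ℝ), 0 < rB ∧
    (∀ q, q ∉ tent n xB rB → a q = 0) ∧
    (∫⁻ q in tent n xB rB, (‖a q‖₊ : ℝ≥0∞) ^ 2 * ENNReal.ofReal q.2⁻¹) ≤ ENNReal.ofReal (rB ^ (-lam))

/-- The tent space `T²₂` norm. -/
def T22norm (n : ℕ) (F : XX n × ℝ → ℂ) : ℝ≥0∞ :=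
  (∫⁻ x : XX n, ∫⁻ q in {q : XX n × ℝ | 0 < q.2 ∧ dist x q.1 < q.2},
      (‖F q‖₊ : ℝ≥0∞) ^ 2 * ENNReal.ofReal (q.2 ^ (-(n : ℝ) - 1))) ^ (1/2 : ℝ)

end


section aux

lemma hausCap_mono {n : ℕ} {lam : ℝ} {E F : Set (XX n)} (h : E ⊆ F) :
    hausCap n lam E ≤ hausCap n lam F := by
  refine le_iInf fun c => le_iInf fun r => le_iInf fun hr => le_iInf fun hcov => ?_
  exact iInf_le_of_le c <| iInf_le_of_le r <| iInf_le_of_le hr <|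
    iInf_le_of_le (h.trans hcov) le_rfl

lemma cap_ball {n : ℕ} (hn : 1 ≤ n) {lam : ℝ} (hlam0 : 0 < lam) (hlamn : lam < n)
    (x : XX n) {t : ℝ} (ht : 0 < t) :
    ENNReal.ofReal (t ^ lam) ≤ hausCap n lam (Metric.ball x t) := by
  have : Nontrivial (XX n) := by
    have : 0 < n := hn
    exact ⟨0, EuclideanSpace.single ⟨0, this⟩ (1:ℝ), by
      intro h
      have := congrArg (fun v : XX n => v ⟨0, this⟩) h
      simp [EuclideanSpace.single] at this⟩
  refine le_iInf fun c => le_iInf fun r => le_iInf fun hr => le_iInf fun hcov => ?_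
  by_cases hcase : ∃ j, t ≤ r j
  · obtain ⟨j, hj⟩ := hcase
    calc ENNReal.ofReal (t ^ lam) ≤ ENNReal.ofReal (r j ^ lam) :=
          ENNReal.ofReal_le_ofReal (Real.rpow_le_rpow ht.le hj hlam0.le)
      _ ≤ _ := ENNReal.le_tsum j
  · push_neg at hcase
    set B := volume (Metric.ball (0 : XX n) 1) with hB
    have hB0 : B ≠ 0 := (measure_ball_pos volume 0 one_pos).ne'
    have hBtop : B ≠ ⊤ := measure_ball_lt_top.ne
    have hvol : volume (Metric.ball x t) ≤ ∑' j, volume (Metric.ball (c j) (r j)) :=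
      (measure_mono hcov).trans (measure_iUnion_le _)
    rw [Measure.addHaar_ball volume x ht.le] at hvol
    have hball : ∀ j, volume (Metric.ball (c j) (r j))
        = ENNReal.ofReal (r j ^ Module.finrank ℝ (XX n)) * B := fun j =>
      Measure.addHaar_ball volume (c j) (hr j).le
    simp_rw [hball, ENNReal.tsum_mul_right] at hvol
    have h1 : ENNReal.ofReal (t ^ Module.finrank ℝ (XX n))
        ≤ ∑' j, ENNReal.ofReal (r j ^ Module.finrank ℝ (XX n)) :=
      (ENNReal.mul_le_mul_iff_left hB0 hBtop).mp hvol
    rw [finrank_euclideanSpace_fin] at h1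
    have key : ∀ j, ENNReal.ofReal (r j ^ n)
        ≤ ENNReal.ofReal (t ^ ((n : ℝ) - lam)) * ENNReal.ofReal (r j ^ lam) := by
      intro j
      rw [← ENNReal.ofReal_mul (Real.rpow_nonneg ht.le _)]
      apply ENNReal.ofReal_le_ofReal
      have : (r j : ℝ) ^ (n : ℕ) = r j ^ lam * r j ^ ((n : ℝ) - lam) := by
        rw [← Real.rpow_natCast (r j) n, ← Real.rpow_add (hr j)]
        ring_nf
      rw [this, mul_comm (t ^ ((n:ℝ) - lam))]
      exact mul_le_mul_of_nonneg_left
        (Real.rpow_le_rpow (hr j).le (hcase j).le (by linarith)) (Real.rpow_nonneg (hr j).le _)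
    have h2 : ENNReal.ofReal (t ^ (n : ℕ))
        ≤ ENNReal.ofReal (t ^ ((n : ℝ) - lam)) * ∑' j, ENNReal.ofReal (r j ^ lam) := by
      calc ENNReal.ofReal (t ^ (n : ℕ)) ≤ ∑' j, ENNReal.ofReal (r j ^ n) := h1
        _ ≤ ∑' j, ENNReal.ofReal (t ^ ((n : ℝ) - lam)) * ENNReal.ofReal (r j ^ lam) :=
          ENNReal.tsum_le_tsum key
        _ = _ := ENNReal.tsum_mul_left
    have ht' : ENNReal.ofReal (t ^ (n : ℕ))
        = ENNReal.ofReal (t ^ ((n : ℝ) - lam)) * ENNReal.ofReal (t ^ lam) := by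
      rw [← ENNReal.ofReal_mul (Real.rpow_nonneg ht.le _), ← Real.rpow_add ht,
        ← Real.rpow_natCast t n]
      ring_nf
    rw [ht'] at h2
    have hne0 : ENNReal.ofReal (t ^ ((n : ℝ) - lam)) ≠ 0 :=
      (ENNReal.ofReal_pos.mpr (Real.rpow_pos_of_pos ht _)).ne'
    exact (ENNReal.mul_le_mul_iff_right hne0 ENNReal.ofReal_ne_top).mp h2

end aux

theorem statement0 (n : ℕ) (hn : 1 ≤ n) (lam : ℝ) (hlam0 : 0 < lam) (hlamn : lam < n) :
    ∃ C : ℝ, 0 < C ∧ ∀ ω : XX n × ℝ → ℝ≥0∞, Measurable ω →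
      choquetInt n lam (ntMax n ω) ≤ 1 →
      ∀ (x : XX n) (t : ℝ), 0 < t → ω (x, t) ≤ ENNReal.ofReal (C * t ^ (-lam)) := by
  refine ⟨2, two_pos, fun ω hmeas hch x t ht => ?_⟩
  by_contra hcon
  push_neg at hcon
  set b := 2 * t ^ (-lam) with hbdef
  have hb : 0 < b := mul_pos two_pos (Real.rpow_pos_of_pos ht _)
  have hsub : ∀ s ∈ Ioc (0:ℝ) b,
      ENNReal.ofReal (t ^ lam) ≤ hausCap n lam {x' | ENNReal.ofReal s < ntMax n ω x'} := by
    intro s hs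
    refine (cap_ball hn hlam0 hlamn x ht).trans (hausCap_mono ?_)
    intro y hy
    have h1 : ω (x, t) ≤ ntMax n ω y :=
      le_iSup₂ (f := fun (q : XX n × ℝ) (_ : 0 < q.2 ∧ dist y q.1 < q.2) => ω q)
        (x, t) ⟨ht, mem_ball.mp hy⟩
    exact lt_of_lt_of_le (lt_of_le_of_lt (ENNReal.ofReal_le_ofReal hs.2) hcon) h1
  have hle : ENNReal.ofReal (t ^ lam) * ENNReal.ofReal b ≤ 1 := by
    calc ENNReal.ofReal (t ^ lam) * ENNReal.ofReal b
        = ∫⁻ _ in Ioc (0:ℝ) b, ENNReal.ofReal (t ^ lam) := by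
          rw [setLIntegral_const, Real.volume_Ioc, sub_zero]
      _ ≤ ∫⁻ s in Ioc (0:ℝ) b, hausCap n lam {x' | ENNReal.ofReal s < ntMax n ω x'} :=
          setLIntegral_mono' measurableSet_Ioc hsub
      _ ≤ choquetInt n lam (ntMax n ω) := lintegral_mono_set Ioc_subset_Ioi_self
      _ ≤ 1 := hch
  rw [← ENNReal.ofReal_mul (Real.rpow_nonneg ht.le _)] at hle
  have h2 : (t ^ lam * b : ℝ) = 2 := by
    rw [hbdef, Real.rpow_neg ht.le]
    field_simp
  rw [h2, ENNReal.ofReal_le_one] at hle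
  linarith
end

section
/- Fix an integer n ≥ 1 and λ ∈ (0,n). There is a constant C = C(n,λ) such that every FṪ^λ-atom a satisfies ‖a‖_{FṪ^λ} ≤ C. -/
open MeasureTheory Filter Metric Set
open scoped ENNReal NNReal Topology

lemma aux_tent_eq (n : ℕ) (hn : 1 ≤ n) (xB : XX n) (rB : ℝ) :
    tent n xB rB = {q : XX n × ℝ | 0 < q.2 ∧ dist q.1 xB + q.2 ≤ rB} := by
  ext ⟨y, t⟩
  simp only [tent, Set.mem_setOf_eq]
  constructor
  · rintro ⟨ht, hsub⟩
    refine ⟨ht, ?_⟩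
    by_contra h'
    push_neg at h'
    set d : ℝ := dist y xB with hd
    have hyB : y ∈ ball xB rB := hsub (mem_ball_self ht)
    have hdr : d < rB := mem_ball.1 hyB
    set s : ℝ := (t + rB - d) / 2 with hs
    have hs0 : 0 < s := by
      have : 0 < t := ht
      simp only [hs]; linarith
    have hst : s < t := by simp only [hs]; linarith
    -- unit vector in direction y - xB
    obtain ⟨u, hnu, hdu⟩ : ∃ u : XX n, ‖u‖ = 1 ∧ y - xB = d • u := by
      rcases eq_or_ne y xB with h | h
      · refine ⟨EuclideanSpace.single ⟨0, hn⟩ (1 : ℝ), ?_, ?_⟩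
        · rw [EuclideanSpace.norm_single]; simp
        · simp [h, hd, dist_self]
      · refine ⟨‖y - xB‖⁻¹ • (y - xB), ?_, ?_⟩
        · have hyx : y - xB ≠ 0 := sub_ne_zero.2 h
          rw [norm_smul, Real.norm_eq_abs, abs_of_nonneg (inv_nonneg.2 (norm_nonneg _)),
            inv_mul_cancel₀ (norm_ne_zero_iff.2 hyx)]
        · have hyx : (‖y - xB‖ : ℝ) ≠ 0 := norm_ne_zero_iff.2 (sub_ne_zero.2 h)
          rw [hd, dist_eq_norm, smul_smul, mul_inv_cancel₀ hyx, one_smul]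
    set z : XX n := y + s • u with hz
    have hzy : dist z y = s := by
      rw [hz, dist_eq_norm, add_sub_cancel_left, norm_smul, hnu,
        Real.norm_eq_abs, abs_of_pos hs0, mul_one]
    have hzball : z ∈ ball xB rB := hsub (mem_ball.2 (by rw [hzy]; exact hst))
    have hzx : dist z xB = d + s := by
      rw [hz, dist_eq_norm]
      have : y + s • u - xB = (d + s) • u := by
        rw [add_smul, ← hdu]; abel
      rw [this, norm_smul, hnu, Real.norm_eq_abs, mul_one,
        abs_of_nonneg (by positivity : (0:ℝ) ≤ d + s)]
    have : d + s < rB := by rw [← hzx]; exact mem_ball.1 hzball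
    simp only [hs] at this
    linarith
  · rintro ⟨ht, hle⟩
    exact ⟨ht, ball_subset_ball' (by linarith)⟩

lemma aux_hausCap_le (n : ℕ) (lam : ℝ) (hlam : 0 < lam) (E : Set (XX n)) (x0 : XX n)
    (R : ℝ) (hR : 0 < R) (hE : E ⊆ ball x0 R) :
    hausCap n lam E ≤ ENNReal.ofReal (R ^ lam) * ENNReal.ofReal ((1 - (2:ℝ) ^ (-lam))⁻¹) := by
  set u : ℝ := (2:ℝ) ^ (-lam) with hu
  have hu0 : 0 < u := Real.rpow_pos_of_pos (by norm_num) _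
  have hu1 : u < 1 := Real.rpow_lt_one_of_one_lt_of_neg (by norm_num) (by linarith)
  have hpos : ∀ j : ℕ, 0 < R * (2:ℝ)⁻¹ ^ j := fun j => by positivity
  have hcov : E ⊆ ⋃ j, Metric.ball x0 (R * (2:ℝ)⁻¹ ^ j) := by
    refine hE.trans fun x hx => mem_iUnion.2 ⟨0, ?_⟩
    simpa using hx
  refine le_trans (iInf_le_of_le (fun _ => x0) (iInf_le_of_le (fun j => R * (2:ℝ)⁻¹ ^ j)
    (iInf_le_of_le hpos (iInf_le_of_le hcov le_rfl)))) ?_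
  have key : ∀ j : ℕ, ENNReal.ofReal ((R * (2:ℝ)⁻¹ ^ j) ^ lam)
      = ENNReal.ofReal (R ^ lam) * (ENNReal.ofReal u) ^ j := by
    intro j
    have e1 : ((2:ℝ)⁻¹ ^ j) ^ lam = u ^ j := by
      have h1 : ((2:ℝ)⁻¹ ^ j : ℝ) = (2:ℝ) ^ (-(j:ℝ)) := by
        rw [inv_pow, ← Real.rpow_natCast (2:ℝ) j, ← Real.rpow_neg (by norm_num)]
      have h2 : (u ^ j : ℝ) = (2:ℝ) ^ (-lam * (j:ℝ)) := by
        rw [hu, ← Real.rpow_natCast ((2:ℝ) ^ (-lam)) j, ← Real.rpow_mul (by norm_num)]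
      rw [h1, h2, ← Real.rpow_mul (by norm_num)]
      ring_nf
    have h3 : (R * (2:ℝ)⁻¹ ^ j) ^ lam = R ^ lam * u ^ j := by
      rw [Real.mul_rpow hR.le (by positivity), e1]
    rw [h3, ENNReal.ofReal_mul (Real.rpow_nonneg hR.le _), ENNReal.ofReal_pow hu0.le]
  rw [tsum_congr key, ENNReal.tsum_mul_left, ENNReal.tsum_geometric]
  refine le_of_eq ?_
  congr 1
  rw [ENNReal.ofReal_inv_of_pos (by linarith), ENNReal.ofReal_sub _ hu0.le, ENNReal.ofReal_one]

lemma aux_hausCap_empty (n : ℕ) (lam : ℝ) (hlam : 0 < lam) :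
    hausCap n lam (∅ : Set (XX n)) = 0 := by
  refine le_antisymm ?_ (zero_le)
  refine ENNReal.le_of_forall_pos_le_add fun ε hε _ => ?_
  rw [zero_add]
  set M' : ℝ := (1 - (2:ℝ) ^ (-lam))⁻¹ with hM'
  have hu1 : (2:ℝ) ^ (-lam) < 1 := Real.rpow_lt_one_of_one_lt_of_neg (by norm_num) (by linarith)
  have hM'0 : 0 < M' := inv_pos.2 (by linarith)
  have he : (0:ℝ) < (ε : ℝ) := hε
  set δ : ℝ := ((ε : ℝ) / M') ^ (1 / lam) with hδ
  have hδ0 : 0 < δ := Real.rpow_pos_of_pos (div_pos he hM'0) _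
  have hb := aux_hausCap_le n lam hlam ∅ 0 δ hδ0 (Set.empty_subset _)
  refine hb.trans (le_of_eq ?_)
  have hδlam : δ ^ lam = (ε : ℝ) / M' := by
    rw [hδ, ← Real.rpow_mul (div_pos he hM'0).le, one_div_mul_cancel hlam.ne', Real.rpow_one]
  rw [hδlam, ← ENNReal.ofReal_mul (div_pos he hM'0).le, div_mul_cancel₀ _ hM'0.ne',
    ENNReal.ofReal_coe_nnreal]
theorem statement4 (n : ℕ) (hn : 1 ≤ n) (lam : ℝ) (hlam0 : 0 < lam) (hlamn : lam < n) :
    ∃ C : ℝ, 0 < C ∧ ∀ a : XX n × ℝ → ℂ, IsTentAtom n lam a →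
      FTnorm n lam a ≤ ENNReal.ofReal C := by
  set M' : ℝ := (1 - (2:ℝ) ^ (-lam))⁻¹ with hM'def
  have hu1 : (2:ℝ) ^ (-lam) < 1 := Real.rpow_lt_one_of_one_lt_of_neg (by norm_num) (by linarith)
  have hM' : 0 < M' := inv_pos.2 (by linarith)
  refine ⟨M' ^ (1/2 : ℝ), Real.rpow_pos_of_pos hM' _, ?_⟩
  rintro a ⟨hameas, xB, rB, hrB, hsupp, hint⟩
  have hrBlam : (0:ℝ) < rB ^ lam := Real.rpow_pos_of_pos hrB _
  set c' : ℝ := (rB ^ lam * M')⁻¹ with hc'def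
  have hc' : 0 < c' := inv_pos.2 (by positivity)
  set ω : XX n × ℝ → ℝ≥0∞ :=
    fun q => Set.indicator (tent n xB rB) (fun _ => ENNReal.ofReal c') q with hωdef
  have htent := aux_tent_eq n hn xB rB
  have htentMeas : MeasurableSet (tent n xB rB) := by
    rw [htent, Set.setOf_and]
    exact (measurableSet_lt measurable_const measurable_snd).inter
      (measurableSet_le ((measurable_fst.dist measurable_const).add measurable_snd)
        measurable_const)
  have hωmeas : Measurable ω := Measurable.indicator measurable_const htentMeas
  have hnt_le : ∀ x, ntMax n ω x ≤ ENNReal.ofReal c' := by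
    intro x
    refine iSup_le fun q => iSup_le fun _ => ?_
    by_cases hq : q ∈ tent n xB rB
    · simp [hωdef, Set.indicator_of_mem hq]
    · simp [hωdef, Set.indicator_of_notMem hq]
  have hnt_zero : ∀ x, x ∉ ball xB rB → ntMax n ω x = 0 := by
    intro x hx
    refine le_antisymm (iSup_le fun q => iSup_le fun hq => ?_) (zero_le)
    by_cases hqt : q ∈ tent n xB rB
    · exact absurd (hqt.2 (mem_ball.2 hq.2)) hx
    · simp [hωdef, Set.indicator_of_notMem hqt]
  -- choquet integral bound
  have hchoq : choquetInt n lam (ntMax n ω) ≤ 1 := by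
    have hb : (∫⁻ t in Set.Ioi (0:ℝ), hausCap n lam {x | ENNReal.ofReal t < ntMax n ω x})
        ≤ ∫⁻ t in Set.Ioi (0:ℝ), Set.indicator (Set.Ioo (0:ℝ) c')
            (fun _ => ENNReal.ofReal (rB ^ lam) * ENNReal.ofReal M') t := by
      refine setLIntegral_mono (measurable_const.indicator measurableSet_Ioo) fun t ht => ?_
      by_cases htc : t < c'
      · rw [Set.indicator_of_mem (Set.mem_Ioo.2 ⟨ht, htc⟩)]
        refine aux_hausCap_le n lam hlam0 _ xB rB hrB fun x hx => ?_
        by_contra hxb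
        rw [Set.mem_setOf_eq, hnt_zero x hxb] at hx
        exact ENNReal.not_lt_zero hx
      · have hempty : {x : XX n | ENNReal.ofReal t < ntMax n ω x} = ∅ := by
          refine Set.eq_empty_iff_forall_notMem.2 fun x hx => ?_
          rw [Set.mem_setOf_eq] at hx
          exact absurd (lt_of_lt_of_le hx ((hnt_le x).trans
            (ENNReal.ofReal_le_ofReal (not_lt.1 htc)))) (lt_irrefl _)
        rw [Set.indicator_of_notMem (fun hmem => htc hmem.2), hempty, aux_hausCap_empty n lam hlam0]
    refine hb.trans ?_
    rw [lintegral_indicator measurableSet_Ioo, Measure.restrict_restrict measurableSet_Ioo,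
      setLIntegral_const]
    have hinter : Set.Ioo (0:ℝ) c' ∩ Set.Ioi (0:ℝ) = Set.Ioo (0:ℝ) c' :=
      Set.inter_eq_left.2 fun x hx => hx.1
    rw [hinter, Real.volume_Ioo, sub_zero, ← ENNReal.ofReal_mul (by positivity),
      ← ENNReal.ofReal_mul (by positivity)]
    rw [hc'def]
    rw [mul_inv_cancel₀ (by positivity)]
    simp
  have hvanish : ∀ q ∈ upperHalf n, ω q = 0 → a q = 0 := by
    intro q _ hωq
    by_cases hq : q ∈ tent n xB rB
    · rw [hωdef] at hωq
      simp only [Set.indicator_of_mem hq] at hωq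
      exact absurd hωq (by simp [ENNReal.ofReal_eq_zero, not_le, hc'])
    · exact hsupp q hq
  have hadm : Admissible n lam a ω := ⟨hωmeas, hchoq, hvanish⟩
  -- integral bound
  have hfun : ∀ q, ((‖a q‖₊ : ℝ≥0∞) ^ 2 / ω q) * ENNReal.ofReal q.2⁻¹
      = Set.indicator (tent n xB rB)
          (fun q => ((‖a q‖₊ : ℝ≥0∞) ^ 2 * ENNReal.ofReal q.2⁻¹) * (ENNReal.ofReal c')⁻¹) q := by
    intro q
    by_cases hq : q ∈ tent n xB rB
    · rw [Set.indicator_of_mem hq]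
      simp only [hωdef, Set.indicator_of_mem hq]
      rw [div_eq_mul_inv]
      ring
    · rw [Set.indicator_of_notMem hq, hsupp q hq]
      simp
  have hintb : (∫⁻ q in upperHalf n, ((‖a q‖₊ : ℝ≥0∞) ^ 2 / ω q) * ENNReal.ofReal q.2⁻¹)
      ≤ ENNReal.ofReal M' := by
    calc (∫⁻ q in upperHalf n, ((‖a q‖₊ : ℝ≥0∞) ^ 2 / ω q) * ENNReal.ofReal q.2⁻¹)
        ≤ ∫⁻ q, ((‖a q‖₊ : ℝ≥0∞) ^ 2 / ω q) * ENNReal.ofReal q.2⁻¹ :=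
          setLIntegral_le_lintegral _ _
      _ = ∫⁻ q, Set.indicator (tent n xB rB)
            (fun q => ((‖a q‖₊ : ℝ≥0∞) ^ 2 * ENNReal.ofReal q.2⁻¹) * (ENNReal.ofReal c')⁻¹) q :=
          lintegral_congr hfun
      _ = ∫⁻ q in tent n xB rB,
            ((‖a q‖₊ : ℝ≥0∞) ^ 2 * ENNReal.ofReal q.2⁻¹) * (ENNReal.ofReal c')⁻¹ :=
          lintegral_indicator htentMeas _
      _ = (∫⁻ q in tent n xB rB, (‖a q‖₊ : ℝ≥0∞) ^ 2 * ENNReal.ofReal q.2⁻¹)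
            * (ENNReal.ofReal c')⁻¹ :=
          lintegral_mul_const' _ _ (by simp [ENNReal.ofReal_eq_zero, not_le, hc'])
      _ ≤ ENNReal.ofReal (rB ^ (-lam)) * (ENNReal.ofReal c')⁻¹ := by
          exact mul_le_mul_left hint _
      _ = ENNReal.ofReal M' := by
          rw [← ENNReal.ofReal_inv_of_pos hc', hc'def, inv_inv,
            ← ENNReal.ofReal_mul (Real.rpow_nonneg hrB.le _)]
          congr 1
          rw [Real.rpow_neg hrB.le, ← mul_assoc, inv_mul_cancel₀ hrBlam.ne', one_mul]
  calc FTnorm n lam a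
      ≤ (∫⁻ q in upperHalf n, ((‖a q‖₊ : ℝ≥0∞) ^ 2 / ω q) * ENNReal.ofReal q.2⁻¹) ^ (1/2 : ℝ) :=
        iInf₂_le ω hadm
    _ ≤ (ENNReal.ofReal M') ^ (1/2 : ℝ) := ENNReal.rpow_le_rpow hintb (by norm_num)
    _ = ENNReal.ofReal (M' ^ (1/2 : ℝ)) := ENNReal.ofReal_rpow_of_pos hM'
end

section
/- Fix an integer n ≥ 1 and λ ∈ (0,n), and let L and (e^{−tL})_{t>0} be as in the context. Let ε > (n−λ)/2. There exists a constant C depending only on n, λ, ε, C₀, c₀ such that for every f ∈ L²(ℝⁿ) with ‖f‖_{L^{2,λ}_L} < ∞ and every (2,1,λ,ε)-molecule m associated to L, |∫_{ℝⁿ} f(x) \overline{m(x)} dx| ≤ C ‖f‖_{L^{2,λ}_L}. -/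
set_option maxHeartbeats 1000000


open MeasureTheory Filter Metric Set
open scoped ENNReal NNReal Topology ComplexConjugate

noncomputable section

/-- The Hilbert space `L²(ℝⁿ)` (complex valued). -/
abbrev HH (n : ℕ) := MeasureTheory.Lp ℂ 2 (volume : Measure (XX n))

/-- The domain of the `M`-th power of an unbounded operator `L`. -/
def iterDom {n : ℕ} (L : HH n →ₗ.[ℂ] HH n) : ℕ → Set (HH n)
  | 0 => Set.univ
  | (k+1) => {f | ∃ h : f ∈ L.domain, (L ⟨f, h⟩ : HH n) ∈ iterDom L k}

open Classical in
/-- `iterApp L M f = L^M f` (with junk value `0` off the domain). -/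
def iterApp {n : ℕ} (L : HH n →ₗ.[ℂ] HH n) : ℕ → HH n → HH n
  | 0, f => f
  | (k+1), f => if h : f ∈ L.domain then iterApp L k (L ⟨f, h⟩) else 0

/-- A nonnegative self-adjoint operator `L` on `L²(ℝⁿ)`, with dense domain, generating a
strongly continuous semigroup `T t = e^{-tL}` of bounded self-adjoint operators whose integral
kernels satisfy the Gaussian upper bound with constants `C₀, c₀`. -/
structure HeatData (n : ℕ) (C₀ c₀ : ℝ) where
  /-- the unbounded operator `L` -/
  L : HH n →ₗ.[ℂ] HH n
  denseDom : Dense (L.domain : Set (HH n))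
  selfAdj : IsSelfAdjoint L
  nonneg : ∀ f : L.domain, 0 ≤ (inner ℂ (L f) (f : HH n) : ℂ).re
  /-- the heat semigroup `T t = e^{-tL}` -/
  T : ℝ → (HH n →L[ℂ] HH n)
  T_selfAdj : ∀ t : ℝ, 0 < t → IsSelfAdjoint (T t)
  T_semigroup : ∀ s t : ℝ, 0 < s → 0 < t → T (s + t) = (T s).comp (T t)
  T_strong_cont : ∀ f : HH n, Tendsto (fun t => T t f) (𝓝[>] (0 : ℝ)) (𝓝 f)
  T_mem_iterDom : ∀ t : ℝ, 0 < t → ∀ f : HH n, ∀ M : ℕ, T t f ∈ iterDom L M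
  T_generator : ∀ f : HH n, ∀ hf : f ∈ L.domain,
    Tendsto (fun t : ℝ => (t : ℂ)⁻¹ • (f - T t f)) (𝓝[>] (0 : ℝ)) (𝓝 (L ⟨f, hf⟩))
  /-- the heat kernel `p_t(x,y)` -/
  ker : ℝ → XX n → XX n → ℂ
  ker_meas : ∀ t : ℝ, 0 < t → Measurable (Function.uncurry (ker t))
  ker_bound : ∀ t : ℝ, 0 < t → ∀ᵐ z : XX n × XX n,
    ‖ker t z.1 z.2‖ ≤ C₀ * t ^ (-(n : ℝ)/2) * Real.exp (-(dist z.1 z.2)^2 / (c₀ * t))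
  ker_repr : ∀ t : ℝ, 0 < t → ∀ f : HH n,
    (T t f : XX n → ℂ) =ᵐ[volume] fun x => ∫ y, ker t x y * (f : XX n → ℂ) y


/-- The function `(x,t) ↦ t² L e^{-t²L} f (x)` on the upper half-space. -/
def Qfun {n : ℕ} {C₀ c₀ : ℝ} (D : HeatData n C₀ c₀) (f : HH n) : XX n × ℝ → ℂ :=
  fun q => (q.2 : ℂ) ^ 2 * (iterApp D.L 1 (D.T (q.2 ^ 2) f) : XX n → ℂ) q.1

/-- `‖f‖_{FḢ^λ_L}`. -/
def FHnorm {n : ℕ} {C₀ c₀ : ℝ} (D : HeatData n C₀ c₀) (lam : ℝ) (f : HH n) : ℝ≥0∞ :=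
  FTnorm n lam (Qfun D f)

/-- The annuli `U_j(B)`. -/
def Uj (n : ℕ) (xB : XX n) (rB : ℝ) : ℕ → Set (XX n)
  | 0 => Metric.ball xB rB
  | (j+1) => Metric.ball xB ((2 : ℝ) ^ (j+1) * rB) \ Metric.ball xB ((2 : ℝ) ^ j * rB)

/-- The `L²`-norm of `g` on a subset `U` of `ℝⁿ`. -/
def locL2 {n : ℕ} (g : HH n) (U : Set (XX n)) : ℝ≥0∞ :=
  (∫⁻ x in U, ((‖(g : XX n → ℂ) x‖₊ : ℝ≥0∞)) ^ 2) ^ (1/2 : ℝ)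

/-- A `(2,M,λ)`-atom associated to `L`. -/
def IsOpAtom {n : ℕ} {C₀ c₀ : ℝ} (D : HeatData n C₀ c₀) (M : ℕ) (lam : ℝ) (a : HH n) : Prop :=
  ∃ (b : HH n) (xB : XX n) (rB : ℝ), 0 < rB ∧ b ∈ iterDom D.L M ∧ a = iterApp D.L M b ∧
    (∀ k ≤ M, ∀ᵐ x ∂(volume : Measure (XX n)),
      x ∉ Metric.ball xB rB → (iterApp D.L k b : XX n → ℂ) x = 0) ∧
    (∀ k ≤ M, rB ^ (2 * (k : ℝ)) * ‖iterApp D.L k b‖ ≤ rB ^ (2 * (M : ℝ) - lam / 2))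

/-- A `(2,M,λ,ε)`-molecule associated to `L`. -/
def IsOpMolecule {n : ℕ} {C₀ c₀ : ℝ} (D : HeatData n C₀ c₀) (M : ℕ) (lam ε : ℝ)
    (m : HH n) : Prop :=
  ∃ (b : HH n) (xB : XX n) (rB : ℝ), 0 < rB ∧ b ∈ iterDom D.L M ∧ m = iterApp D.L M b ∧
    ∀ k ≤ M, ∀ j : ℕ,
      ENNReal.ofReal (rB ^ (2 * (k : ℝ))) * locL2 (iterApp D.L k b) (Uj n xB rB j) ≤
        ENNReal.ofReal (rB ^ (2 * (M : ℝ)) * (2 : ℝ) ^ (-(j : ℝ) * ε) *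
          ((2 : ℝ) ^ (j : ℝ) * rB) ^ (-(lam / 2)))

/-- An atomic `(2,M,λ)`-representation of `f`. -/
def IsAtomicRep {n : ℕ} {C₀ c₀ : ℝ} (D : HeatData n C₀ c₀) (M : ℕ) (lam : ℝ)
    (f : HH n) (c : ℕ → ℂ) (a : ℕ → HH n) : Prop :=
  Summable (fun j => ‖c j‖) ∧ (∀ j, IsOpAtom D M lam (a j)) ∧
    Tendsto (fun N => ∑ j ∈ Finset.range N, c j • a j) atTop (𝓝 f)

/-- A molecular `(2,M,λ,ε)`-representation of `f`. -/
def IsMolecularRep {n : ℕ} {C₀ c₀ : ℝ} (D : HeatData n C₀ c₀) (M : ℕ) (lam ε : ℝ)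
    (f : HH n) (c : ℕ → ℂ) (m : ℕ → HH n) : Prop :=
  Summable (fun j => ‖c j‖) ∧ (∀ j, IsOpMolecule D M lam ε (m j)) ∧
    Tendsto (fun N => ∑ j ∈ Finset.range N, c j • m j) atTop (𝓝 f)

/-- The atomic norm `‖f‖_{FḢ^λ_{L,at,M}}`: the infimum of `∑ |λ_j|` over all atomic
`(2,M,λ)`-representations of `f`. -/
def atomicNorm {n : ℕ} {C₀ c₀ : ℝ} (D : HeatData n C₀ c₀) (M : ℕ) (lam : ℝ)
    (f : HH n) : ℝ≥0∞ :=
  sInf {s : ℝ≥0∞ | ∃ c a, IsAtomicRep D M lam f c a ∧ s = ∑' j, ENNReal.ofReal ‖c j‖}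

/-- The molecular norm: the infimum of `∑ |λ_j|` over all molecular
`(2,M,λ,ε)`-representations of `f`. -/
def molecularNorm {n : ℕ} {C₀ c₀ : ℝ} (D : HeatData n C₀ c₀) (M : ℕ) (lam ε : ℝ)
    (f : HH n) : ℝ≥0∞ :=
  sInf {s : ℝ≥0∞ | ∃ c m, IsMolecularRep D M lam ε f c m ∧ s = ∑' j, ENNReal.ofReal ‖c j‖}

/-- The quadratic Campanato norm
`‖f‖_{L^{2,λ}_L} = sup_B (r_B^{-λ} ∫_B |f - e^{-r_B²L}f|²)^{1/2}`. -/
def campNorm {n : ℕ} {C₀ c₀ : ℝ} (D : HeatData n C₀ c₀) (lam : ℝ) (f : HH n) : ℝ≥0∞ :=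
  ⨆ (xB : XX n) (rB : ℝ) (_ : 0 < rB),
    (ENNReal.ofReal (rB ^ (-lam)) *
      ∫⁻ x in Metric.ball xB rB, ((‖(↑(f - D.T (rB ^ 2) f) : XX n → ℂ) x‖₊ : ℝ≥0∞)) ^ 2) ^
      (1/2 : ℝ)

/-- `R` is the bounded inverse `(I + r²L)⁻¹`. -/
def IsResolvent {n : ℕ} {C₀ c₀ : ℝ} (D : HeatData n C₀ c₀) (r : ℝ)
    (R : HH n →L[ℂ] HH n) : Prop :=
  (∀ f : HH n, ∃ h : R f ∈ D.L.domain, R f + (r ^ 2 : ℂ) • D.L ⟨R f, h⟩ = f) ∧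
  (∀ g : HH n, ∀ hg : g ∈ D.L.domain, R (g + (r ^ 2 : ℂ) • D.L ⟨g, hg⟩) = g)

/-- The resolvent variant of the Campanato norm,
`sup_B (r_B^{-λ} ∫_B |f - (I + r_B²L)^{-1}f|²)^{1/2}`. -/
def campNormRes {n : ℕ} {C₀ c₀ : ℝ} (D : HeatData n C₀ c₀) (lam : ℝ)
    (Res : ℝ → (HH n →L[ℂ] HH n)) (f : HH n) : ℝ≥0∞ :=
  ⨆ (xB : XX n) (rB : ℝ) (_ : 0 < rB),
    (ENNReal.ofReal (rB ^ (-lam)) *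
      ∫⁻ x in Metric.ball xB rB, ((‖(↑(f - Res rB f) : XX n → ℂ) x‖₊ : ℝ≥0∞)) ^ 2) ^
      (1/2 : ℝ)

end

-- ===================== helper development =====================
noncomputable section HelperDev
open Metric Set MeasureTheory Filter

variable {n : ℕ}

/-- a.e.-measurable ENNReal norm of an Lp function -/
def Wfn (g : HH n) : XX n → ℝ≥0∞ := fun x => (‖(g : XX n → ℂ) x‖₊ : ℝ≥0∞)

lemma Wfn_aemeas (g : HH n) : AEMeasurable (Wfn g) (volume : Measure (XX n)) :=
  MeasureTheory.AEStronglyMeasurable.enorm (MeasureTheory.Lp.aestronglyMeasurable g)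

lemma Uj_measurableSet (c : XX n) (r : ℝ) (j : ℕ) : MeasurableSet (Uj n c r j) := by
  cases j with
  | zero => exact measurableSet_ball
  | succ k => exact measurableSet_ball.diff measurableSet_ball

lemma Uj_subset_ball (c : XX n) (r : ℝ) (j : ℕ) : Uj n c r j ⊆ ball c ((2:ℝ) ^ j * r) := by
  cases j with
  | zero => simpa [Uj] using fun x hx => hx
  | succ k => exact fun x hx => hx.1

lemma Uj_pairwise_disjoint (c : XX n) (r : ℝ) (hr : 0 < r) :
    Pairwise (Function.onFun Disjoint (Uj n c r)) := by
  have hsub : ∀ i j : ℕ, i ≤ j → Uj n c r i ⊆ ball c ((2:ℝ) ^ j * r) := by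
    intro i j hij
    refine (Uj_subset_ball c r i).trans (ball_subset_ball ?_)
    have : (2:ℝ) ^ i ≤ (2:ℝ) ^ j := pow_le_pow_right₀ one_le_two hij
    nlinarith
  have key : ∀ i j : ℕ, i < j → Disjoint (Uj n c r i) (Uj n c r j) := by
    intro i j hij
    obtain ⟨k, rfl⟩ : ∃ k, j = k + 1 := ⟨j - 1, by omega⟩
    have h1 : Uj n c r i ⊆ ball c ((2:ℝ) ^ k * r) := hsub i k (by omega)
    refine Set.disjoint_left.2 fun x hx hx' => ?_
    exact hx'.2 (h1 hx)
  intro i j hij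
  rcases lt_or_gt_of_ne hij with h | h
  · exact key i j h
  · exact (key j i h).symm

lemma ball_subset_iUnion_Uj (c : XX n) (r : ℝ) (j : ℕ) :
    ball c ((2:ℝ) ^ j * r) ⊆ ⋃ i, Uj n c r i := by
  induction j with
  | zero =>
    intro x hx
    exact Set.mem_iUnion.2 ⟨0, by simpa [Uj] using hx⟩
  | succ k ih =>
    intro x hx
    by_cases h : x ∈ ball c ((2:ℝ) ^ k * r)
    · exact ih h
    · exact Set.mem_iUnion.2 ⟨k + 1, ⟨hx, h⟩⟩

lemma iUnion_Uj (c : XX n) (r : ℝ) (hr : 0 < r) : (⋃ i, Uj n c r i) = Set.univ := by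
  refine Set.eq_univ_of_forall fun x => ?_
  obtain ⟨j, hj⟩ := pow_unbounded_of_one_lt (dist x c / r) (one_lt_two (α := ℝ))
  have : dist x c < (2:ℝ) ^ j * r := by
    rw [div_lt_iff₀ hr] at hj; linarith
  exact ball_subset_iUnion_Uj c r j (by simpa [mem_ball] using this)

lemma lintegral_eq_tsum_Uj (h : XX n → ℝ≥0∞) (c : XX n) {r : ℝ} (hr : 0 < r) :
    ∫⁻ x, h x = ∑' j, ∫⁻ x in Uj n c r j, h x := by
  rw [← MeasureTheory.lintegral_iUnion (Uj_measurableSet c r)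
    (Uj_pairwise_disjoint c r hr) h, iUnion_Uj c r hr, Measure.restrict_univ]

lemma lintegral_CS {μ : Measure (XX n)} {a b : XX n → ℝ≥0∞}
    (ha : AEMeasurable a μ) (hb : AEMeasurable b μ) :
    ∫⁻ x, a x * b x ∂μ ≤ (∫⁻ x, a x ^ 2 ∂μ) ^ (1/2:ℝ) * (∫⁻ x, b x ^ 2 ∂μ) ^ (1/2:ℝ) := by
  have hpq : Real.HolderConjugate 2 2 := Real.HolderConjugate.two_two
  have h := ENNReal.lintegral_mul_le_Lp_mul_Lq μ hpq ha hb
  have h2 : ∀ x : ℝ≥0∞, x ^ (2:ℝ) = x ^ 2 := fun x => by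
    rw [← ENNReal.rpow_natCast x 2]; norm_num
  simpa [Pi.mul_apply, h2] using h

lemma lintegral_le_sqrt_mul (μ : Measure (XX n)) {b : XX n → ℝ≥0∞} (hb : AEMeasurable b μ)
    (s : Set (XX n)) :
    ∫⁻ x in s, b x ∂μ ≤ (μ s) ^ (1/2:ℝ) * (∫⁻ x in s, b x ^ 2 ∂μ) ^ (1/2:ℝ) := by
  have h := lintegral_CS (μ := μ.restrict s) (a := fun _ => 1) aemeasurable_const hb.restrict
  simpa [Measure.restrict_apply_univ] using h

lemma camp_ball {C₀ c₀ : ℝ} (D : HeatData n C₀ c₀) (lam : ℝ) (f : HH n)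
    (z : XX n) {ρ : ℝ} (hρ : 0 < ρ) :
    ∫⁻ x in ball z ρ, Wfn (f - D.T (ρ^2) f) x ^ 2 ≤
      (campNorm D lam f) ^ 2 * ENNReal.ofReal (ρ ^ lam) := by
  set I := ∫⁻ x in ball z ρ, Wfn (f - D.T (ρ^2) f) x ^ 2 with hI
  have h1 : (ENNReal.ofReal (ρ ^ (-lam)) * I) ^ (1/2:ℝ) ≤ campNorm D lam f := by
    unfold campNorm
    exact le_iSup_of_le z (le_iSup_of_le ρ (le_iSup_of_le hρ le_rfl))
  have h2 : ENNReal.ofReal (ρ ^ (-lam)) * I ≤ (campNorm D lam f) ^ 2 := by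
    have h3 := ENNReal.rpow_le_rpow h1 (by norm_num : (0:ℝ) ≤ 2)
    rw [← ENNReal.rpow_mul] at h3
    norm_num at h3
    exact h3
  calc I = ENNReal.ofReal (ρ ^ lam) * (ENNReal.ofReal (ρ ^ (-lam)) * I) := by
        rw [← mul_assoc, ← ENNReal.ofReal_mul (by positivity), ← Real.rpow_add hρ]
        simp
    _ ≤ ENNReal.ofReal (ρ ^ lam) * (campNorm D lam f) ^ 2 := mul_le_mul_right h2 _
    _ = (campNorm D lam f) ^ 2 * ENNReal.ofReal (ρ ^ lam) := mul_comm _ _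

lemma le_covering (hn : 1 ≤ n) {h : XX n → ℝ≥0∞} (hm : AEMeasurable h (volume : Measure (XX n)))
    {ρ R : ℝ} (hρ : 0 < ρ) (hR : 0 < R) {S : ℝ≥0∞}
    (hS : ∀ z : XX n, ∫⁻ x in ball z ρ, h x ≤ S) (z : XX n) :
    ∫⁻ x in ball z R, h x ≤ ENNReal.ofReal (((R + ρ)/ρ) ^ n) * S := by
  haveI : Nonempty (Fin n) := Fin.pos_iff_nonempty.1 (by omega)
  haveI : Nontrivial (XX n) := by
    refine ⟨0, EuclideanSpace.single (Classical.arbitrary (Fin n)) 1, fun hcon => ?_⟩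
    have := congrFun (congrArg (fun (v : XX n) => (v : Fin n → ℝ)) hcon)
      (Classical.arbitrary (Fin n))
    simp [EuclideanSpace.single] at this
  set ν := (volume : Measure (XX n)) with hν
  set h' := hm.mk h with hh'
  have hmeas : Measurable h' := hm.measurable_mk
  have hrest : ∀ s : Set (XX n), ∫⁻ x in s, h x ∂ν = ∫⁻ x in s, h' x ∂ν := fun s =>
    lintegral_congr_ae (ae_restrict_of_ae hm.ae_eq_mk)
  have hball : ∀ (y : XX n) (s : ℝ), 0 ≤ s →
      ν (ball y s) = ENNReal.ofReal (s ^ n) * ν (ball 0 1) := by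
    intro y s hs
    rw [hν, Measure.addHaar_ball volume y hs, finrank_euclideanSpace_fin]
  -- the double integral
  set A : Set (XX n × XX n) := {p | dist p.1 z < R ∧ dist p.2 p.1 < ρ} with hA
  have hAmeas : MeasurableSet A := by
    have h1 : MeasurableSet {p : XX n × XX n | dist p.1 z < R} :=
      measurableSet_lt (measurable_fst.dist measurable_const) measurable_const
    have h2 : MeasurableSet {p : XX n × XX n | dist p.2 p.1 < ρ} :=
      measurableSet_lt (measurable_snd.dist measurable_fst) measurable_const
    exact h1.inter h2
  set G : XX n × XX n → ℝ≥0∞ := A.indicator (fun p => h' p.1) with hG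
  have hGmeas : Measurable G := (hmeas.comp measurable_fst).indicator hAmeas
  have step1 : ∀ y : XX n, ∫⁻ w, G (y, w) ∂ν =
      (ball z R).indicator (fun y' => h' y' * (ENNReal.ofReal (ρ ^ n) * ν (ball 0 1))) y := by
    intro y
    by_cases hy : dist y z < R
    · have : (fun w => G (y, w)) = (ball y ρ).indicator (fun _ => h' y) := by
        funext w
        simp only [hG, Set.indicator, hA, Set.mem_setOf_eq, Metric.mem_ball]
        by_cases hw : dist w y < ρ <;> simp [hy, hw]
      rw [this, lintegral_indicator_const measurableSet_ball, hball y ρ hρ.le,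
        Set.indicator_of_mem (Metric.mem_ball.2 hy)]
    · have : (fun w => G (y, w)) = fun _ => 0 := by
        funext w
        simp only [hG, Set.indicator, hA, Set.mem_setOf_eq]
        simp [hy]
      rw [this, lintegral_zero, Set.indicator_of_notMem (fun hc => hy (Metric.mem_ball.1 hc))]
  have step2 : ∀ w : XX n, ∫⁻ y, G (y, w) ∂ν ≤
      (ball z (R + ρ)).indicator (fun _ => S) w := by
    intro w
    by_cases hw : dist w z < R + ρ
    · rw [Set.indicator_of_mem (Metric.mem_ball.2 hw)]
      have hle : ∀ y, G (y, w) ≤ (ball w ρ).indicator h' y := by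
        intro y
        simp only [hG, Set.indicator, hA, Set.mem_setOf_eq, Metric.mem_ball]
        by_cases hyA : dist y z < R ∧ dist w y < ρ
        · rw [if_pos hyA, if_pos (by rw [dist_comm]; exact hyA.2)]
        · rw [if_neg hyA]; exact zero_le
      calc ∫⁻ y, G (y, w) ∂ν ≤ ∫⁻ y, (ball w ρ).indicator h' y ∂ν := lintegral_mono hle
        _ = ∫⁻ y in ball w ρ, h' y ∂ν := lintegral_indicator measurableSet_ball h'
        _ = ∫⁻ y in ball w ρ, h y ∂ν := (hrest _).symm
        _ ≤ S := hS w
    · rw [Set.indicator_of_notMem (fun hc => hw (Metric.mem_ball.1 hc))]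
      have : ∀ y, G (y, w) = 0 := by
        intro y
        simp only [hG, Set.indicator, hA, Set.mem_setOf_eq]
        rw [if_neg]
        rintro ⟨h1, h2⟩
        exact hw (lt_of_le_of_lt (dist_triangle w y z) (by linarith))
      simp [this]
  have swap : ∫⁻ y, ∫⁻ w, G (y, w) ∂ν ∂ν = ∫⁻ w, ∫⁻ y, G (y, w) ∂ν ∂ν :=
    lintegral_lintegral_swap hGmeas.aemeasurable
  have lhs_eq : ∫⁻ y, ∫⁻ w, G (y, w) ∂ν ∂ν =
      (∫⁻ x in ball z R, h' x ∂ν) * (ENNReal.ofReal (ρ ^ n) * ν (ball 0 1)) := by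
    rw [lintegral_congr step1, lintegral_indicator measurableSet_ball,
      lintegral_mul_const'' _ hmeas.aemeasurable.restrict]
  have rhs_le : ∫⁻ w, ∫⁻ y, G (y, w) ∂ν ∂ν ≤ ν (ball z (R + ρ)) * S := by
    calc ∫⁻ w, ∫⁻ y, G (y, w) ∂ν ∂ν ≤ ∫⁻ w, (ball z (R+ρ)).indicator (fun _ => S) w ∂ν :=
          lintegral_mono step2
      _ = ν (ball z (R+ρ)) * S := by
          rw [lintegral_indicator_const measurableSet_ball]; ring
  have key : (∫⁻ x in ball z R, h x ∂ν) * (ENNReal.ofReal (ρ ^ n) * ν (ball 0 1)) ≤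
      (ENNReal.ofReal ((R + ρ) ^ n) * ν (ball 0 1)) * S := by
    rw [hrest]
    calc (∫⁻ x in ball z R, h' x ∂ν) * (ENNReal.ofReal (ρ ^ n) * ν (ball 0 1))
        = ∫⁻ y, ∫⁻ w, G (y, w) ∂ν ∂ν := lhs_eq.symm
      _ = ∫⁻ w, ∫⁻ y, G (y, w) ∂ν ∂ν := swap
      _ ≤ ν (ball z (R + ρ)) * S := rhs_le
      _ = (ENNReal.ofReal ((R + ρ) ^ n) * ν (ball 0 1)) * S := by
          rw [hball z (R+ρ) (by linarith)]
  -- cancellation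
  have hv0 : ν (ball 0 1) ≠ 0 := (measure_ball_pos ν 0 one_pos).ne'
  have hvt : ν (ball 0 1) ≠ ⊤ := measure_ball_lt_top.ne
  have hρ0 : ENNReal.ofReal (ρ ^ n) ≠ 0 := by
    simp only [ne_eq, ENNReal.ofReal_eq_zero, not_le]; positivity
  have hρt : ENNReal.ofReal (ρ ^ n) ≠ ⊤ := ENNReal.ofReal_ne_top
  have hfactor : ENNReal.ofReal (ρ ^ n) * ENNReal.ofReal (((R + ρ)/ρ) ^ n) =
      ENNReal.ofReal ((R + ρ) ^ n) := by
    rw [← ENNReal.ofReal_mul (by positivity)]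
    congr 1
    rw [← mul_pow, mul_div_cancel₀ _ hρ.ne']
  rw [← ENNReal.mul_le_mul_iff_right (a := ENNReal.ofReal (ρ ^ n) * ν (ball 0 1))
    (by simp [hρ0, hv0]) (by simp [ENNReal.mul_ne_top hρt hvt])]
  calc (ENNReal.ofReal (ρ ^ n) * ν (ball 0 1)) * (∫⁻ x in ball z R, h x ∂ν)
      = (∫⁻ x in ball z R, h x ∂ν) * (ENNReal.ofReal (ρ ^ n) * ν (ball 0 1)) := mul_comm _ _
    _ ≤ (ENNReal.ofReal ((R + ρ) ^ n) * ν (ball 0 1)) * S := key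
    _ = (ENNReal.ofReal (ρ ^ n) * ν (ball 0 1)) * (ENNReal.ofReal (((R + ρ)/ρ) ^ n) * S) := by
        rw [← hfactor]; ring

lemma geom_ofReal_tsum_ne_top {a : ℝ} (ha : 0 < a) :
    ∑' j : ℕ, ENNReal.ofReal ((2:ℝ) ^ (-(j:ℝ) * a)) ≠ ∞ := by
  have hterm : ∀ j : ℕ, ENNReal.ofReal ((2:ℝ) ^ (-(j:ℝ) * a)) =
      (ENNReal.ofReal ((2:ℝ) ^ (-a))) ^ j := by
    intro j
    rw [← ENNReal.ofReal_pow (by positivity), ← Real.rpow_natCast ((2:ℝ) ^ (-a)) j,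
      ← Real.rpow_mul (by norm_num)]
    congr 1
    ring
  rw [tsum_congr hterm, ENNReal.tsum_geometric]
  refine ENNReal.inv_ne_top.2 ?_
  have hlt : ENNReal.ofReal ((2:ℝ) ^ (-a)) < 1 := by
    rw [ENNReal.ofReal_lt_one]
    exact Real.rpow_lt_one_of_one_lt_of_neg one_lt_two (by linarith)
  simp only [ne_eq, tsub_eq_zero_iff_le, not_le]
  exact hlt

def gam (c₀ : ℝ) (l : ℕ) : ℝ≥0∞ := ENNReal.ofReal (Real.exp ((1 - (4:ℝ)^l) / (4*c₀)))

lemma gam_tsum_ne_top {c₀ : ℝ} (hc₀ : 0 < c₀) (c : ℝ) :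
    ∑' l : ℕ, gam c₀ l * ENNReal.ofReal ((2:ℝ) ^ ((l:ℝ) * c)) ≠ ∞ := by
  set v : ℕ → ℝ := fun l => Real.exp ((1 - (4:ℝ)^l) / (4*c₀)) * (2:ℝ) ^ ((l:ℝ)*c) with hv
  have hpos : ∀ l, 0 < v l := fun l => by
    have := Real.exp_pos ((1 - (4:ℝ)^l) / (4*c₀))
    have := Real.rpow_pos_of_pos (by norm_num : (0:ℝ) < 2) ((l:ℝ)*c)
    positivity
  have hrat : ∀ l : ℕ, v (l+1) = (Real.exp (-(3 * (4:ℝ)^l) / (4*c₀)) * (2:ℝ)^c) * v l := by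
    intro l
    have e1 : Real.exp (-(3 * (4:ℝ)^l) / (4*c₀)) * Real.exp ((1 - (4:ℝ)^l) / (4*c₀)) =
        Real.exp ((1 - (4:ℝ)^(l+1)) / (4*c₀)) := by
      rw [← Real.exp_add]; congr 1; field_simp; ring
    have e2 : (2:ℝ)^c * (2:ℝ)^((l:ℝ)*c) = (2:ℝ)^((↑(l+1):ℝ)*c) := by
      rw [← Real.rpow_add (by norm_num : (0:ℝ) < 2)]; congr 1; push_cast; ring
    simp only [hv]
    rw [← e1, ← e2]
    ring
  have hto : Filter.Tendsto (fun l : ℕ => Real.exp (-(3*(4:ℝ)^l)/(4*c₀)) * (2:ℝ)^c)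
      Filter.atTop (nhds 0) := by
    have h4 : Filter.Tendsto (fun l : ℕ => (4:ℝ)^l) Filter.atTop Filter.atTop :=
      tendsto_pow_atTop_atTop_of_one_lt (by norm_num)
    have h5 : Filter.Tendsto (fun l : ℕ => -(3*(4:ℝ)^l)/(4*c₀)) Filter.atTop Filter.atBot := by
      have : ∀ l : ℕ, -(3*(4:ℝ)^l)/(4*c₀) = (4:ℝ)^l * (-3/(4*c₀)) := fun l => by ring
      simp only [this]
      refine Filter.Tendsto.atTop_mul_const_of_neg ?_ h4
      have h7 : (0:ℝ) < 4*c₀ := by positivity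
      exact div_neg_of_neg_of_pos (by norm_num) h7
    have h6 := Real.tendsto_exp_atBot.comp h5
    simpa using h6.mul_const ((2:ℝ)^c)
  have hsum : Summable v := by
    apply summable_of_ratio_norm_eventually_le (r := 1/2) (by norm_num)
    filter_upwards [hto.eventually (gt_mem_nhds (by norm_num : (0:ℝ) < 1/2))] with l hl
    rw [Real.norm_eq_abs, Real.norm_eq_abs, abs_of_pos (hpos _), abs_of_pos (hpos _), hrat l]
    have h0 : 0 ≤ Real.exp (-(3*(4:ℝ)^l)/(4*c₀)) * (2:ℝ)^c :=
      le_of_lt (by have := Real.exp_pos (-(3*(4:ℝ)^l)/(4*c₀));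
                   have := Real.rpow_pos_of_pos (by norm_num : (0:ℝ) < 2) c; positivity)
    calc Real.exp (-(3 * (4:ℝ)^l) / (4*c₀)) * (2:ℝ)^c * v l ≤ (1/2) * v l := by
          apply mul_le_mul_of_nonneg_right (le_of_lt hl) (hpos l).le
      _ = 1/2 * v l := rfl
  have heq : ∀ l : ℕ, gam c₀ l * ENNReal.ofReal ((2:ℝ) ^ ((l:ℝ) * c)) = ENNReal.ofReal (v l) := by
    intro l
    rw [hv, gam, ← ENNReal.ofReal_mul (Real.exp_nonneg _)]
  rw [tsum_congr heq, ← ENNReal.ofReal_tsum_of_nonneg (fun l => (hpos l).le) hsum]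
  exact ENNReal.ofReal_ne_top

lemma kernel_pointwise {C₀ c₀ : ℝ} (hC₀ : 0 < C₀) (D : HeatData n C₀ c₀) {t : ℝ} (ht : 0 < t)
    (g : HH n) :
    ∀ᵐ x : XX n, Wfn (D.T t g) x ≤ ENNReal.ofReal (C₀ * t ^ (-(n:ℝ)/2)) *
      ∫⁻ y, ENNReal.ofReal (Real.exp (-(dist x y)^2 / (c₀ * t))) * Wfn g y := by
  have hrep := D.ker_repr t ht g
  have hb := D.ker_bound t ht
  rw [MeasureTheory.Measure.volume_eq_prod] at hb
  have hb' := MeasureTheory.Measure.ae_ae_of_ae_prod hb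
  filter_upwards [hrep, hb'] with x hx hbx
  have hmono : ∫⁻ y, (‖D.ker t x y‖₊ : ℝ≥0∞) * Wfn g y ≤
      ∫⁻ y, ENNReal.ofReal (C₀ * t ^ (-(n:ℝ)/2)) *
        (ENNReal.ofReal (Real.exp (-(dist x y)^2 / (c₀ * t))) * Wfn g y) := by
    refine lintegral_mono_ae ?_
    filter_upwards [hbx] with y hy
    rw [← mul_assoc]
    refine mul_le_mul_left ?_ _
    rw [← enorm_eq_nnnorm, ← ofReal_norm_eq_enorm, ← ENNReal.ofReal_mul (by positivity)]
    exact ENNReal.ofReal_le_ofReal hy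
  have hmeasG : AEMeasurable (fun y => ENNReal.ofReal (Real.exp (-(dist x y)^2 / (c₀ * t))) *
      Wfn g y) (volume : Measure (XX n)) := by
    refine AEMeasurable.mul ?_ (Wfn_aemeas g)
    exact (ENNReal.measurable_ofReal.comp
      ((Real.measurable_exp.comp ((measurable_const.dist measurable_id).pow_const 2|>.neg.div_const _)))).aemeasurable
  calc Wfn (D.T t g) x = (‖∫ y, D.ker t x y * (g : XX n → ℂ) y‖₊ : ℝ≥0∞) := by
        rw [Wfn, hx]
    _ ≤ ∫⁻ y, (‖D.ker t x y * (g : XX n → ℂ) y‖₊ : ℝ≥0∞) :=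
        MeasureTheory.enorm_integral_le_lintegral_enorm _
    _ = ∫⁻ y, (‖D.ker t x y‖₊ : ℝ≥0∞) * Wfn g y := by
        simp [nnnorm_mul, ENNReal.coe_mul, Wfn]
    _ ≤ ∫⁻ y, ENNReal.ofReal (C₀ * t ^ (-(n:ℝ)/2)) *
        (ENNReal.ofReal (Real.exp (-(dist x y)^2 / (c₀ * t))) * Wfn g y) := hmono
    _ = ENNReal.ofReal (C₀ * t ^ (-(n:ℝ)/2)) *
        ∫⁻ y, ENNReal.ofReal (Real.exp (-(dist x y)^2 / (c₀ * t))) * Wfn g y :=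
        lintegral_const_mul'' _ hmeasG

lemma gauss_annuli {c₀ : ℝ} (hc₀ : 0 < c₀) {t : ℝ} (ht : 0 < t) (x : XX n)
    {g : XX n → ℝ≥0∞} (hg : AEMeasurable g (volume : Measure (XX n))) :
    ∫⁻ y, ENNReal.ofReal (Real.exp (-(dist x y)^2 / (c₀ * t))) * g y ≤
      ∑' l, gam c₀ l * ∫⁻ y in ball x ((2:ℝ)^l * Real.sqrt t), g y := by
  have hσ : 0 < Real.sqrt t := Real.sqrt_pos.2 ht
  rw [lintegral_eq_tsum_Uj (fun y => ENNReal.ofReal (Real.exp (-(dist x y)^2 / (c₀ * t))) * g y)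
    x hσ]
  refine ENNReal.tsum_le_tsum fun l => ?_
  have hpt : ∀ y ∈ Uj n x (Real.sqrt t) l,
      ENNReal.ofReal (Real.exp (-(dist x y)^2 / (c₀*t))) ≤ gam c₀ l := by
    intro y hy
    apply ENNReal.ofReal_le_ofReal
    apply Real.exp_le_exp.2
    cases l with
    | zero =>
      have h1 : 0 ≤ (dist x y)^2 := sq_nonneg _
      have h2 : 0 < c₀ * t := by positivity
      have : -(dist x y)^2 / (c₀*t) ≤ 0 := by
        apply div_nonpos_of_nonpos_of_nonneg <;> linarith
      simpa using this
    | succ k =>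
      have hd : (2:ℝ)^k * Real.sqrt t ≤ dist y x := by
        have h2 := hy.2
        simp only [Metric.mem_ball, not_lt] at h2
        exact h2
      have hd2 : (4:ℝ)^k * t ≤ (dist x y)^2 := by
        have hnn : (0:ℝ) ≤ (2:ℝ)^k * Real.sqrt t := by positivity
        have := pow_le_pow_left₀ hnn hd 2
        rw [dist_comm]
        calc (4:ℝ)^k * t = ((2:ℝ)^2)^k * t := by norm_num
          _ = ((2:ℝ)^k)^2 * t := by rw [← pow_mul, ← pow_mul]; ring_nf
          _ = ((2:ℝ)^k * Real.sqrt t)^2 := by rw [mul_pow, Real.sq_sqrt ht.le]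
          _ ≤ (dist y x)^2 := this
      rw [div_le_div_iff₀ (by positivity) (by positivity)]
      have h4 : (4:ℝ)^(k+1) = 4 * 4^k := by ring
      nlinarith [mul_pos hc₀ ht, hd2, pow_pos (by norm_num : (0:ℝ) < 4) k,
        mul_le_mul_of_nonneg_right hd2 (le_of_lt (mul_pos (by norm_num : (0:ℝ) < 4) hc₀))]
  calc ∫⁻ y in Uj n x (Real.sqrt t) l,
        ENNReal.ofReal (Real.exp (-(dist x y)^2 / (c₀ * t))) * g y
      ≤ ∫⁻ y in Uj n x (Real.sqrt t) l, gam c₀ l * g y := by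
        refine lintegral_mono_ae ?_
        refine (MeasureTheory.ae_restrict_iff' (Uj_measurableSet x (Real.sqrt t) l)).2 ?_
        exact Filter.Eventually.of_forall fun y hy => mul_le_mul_left (hpt y hy) _
    _ = gam c₀ l * ∫⁻ y in Uj n x (Real.sqrt t) l, g y := lintegral_const_mul'' _ hg.restrict
    _ ≤ gam c₀ l * ∫⁻ y in ball x ((2:ℝ)^l * Real.sqrt t), g y :=
        mul_le_mul_right (lintegral_mono_set (Uj_subset_ball x (Real.sqrt t) l)) _

lemma xx_nontrivial (hn : 1 ≤ n) : Nontrivial (XX n) := by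
  haveI : Nonempty (Fin n) := Fin.pos_iff_nonempty.1 (by omega)
  refine ⟨0, EuclideanSpace.single (Classical.arbitrary (Fin n)) 1, fun hcon => ?_⟩
  have := congrFun (congrArg (fun (v : XX n) => (v : Fin n → ℝ)) hcon)
    (Classical.arbitrary (Fin n))
  simp [EuclideanSpace.single] at this

lemma ball_vol (hn : 1 ≤ n) (x : XX n) {s : ℝ} (hs : 0 ≤ s) :
    volume (ball x s) = ENNReal.ofReal (s ^ (n:ℝ)) * volume (ball (0:XX n) 1) := by
  haveI := xx_nontrivial (n := n) hn
  rw [Measure.addHaar_ball volume x hs, finrank_euclideanSpace_fin, ← Real.rpow_natCast s n]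

lemma pairing_integrable (m u : HH n) :
    Integrable (fun x => (u : XX n → ℂ) x * (starRingEnd ℂ) ((m : XX n → ℂ) x))
      (volume : Measure (XX n)) := by
  have h := MeasureTheory.L2.integrable_inner (𝕜 := ℂ) m u
  have heq : (fun x => (inner ℂ ((m : XX n → ℂ) x) ((u : XX n → ℂ) x) : ℂ)) =
      fun x => (u : XX n → ℂ) x * (starRingEnd ℂ) ((m : XX n → ℂ) x) := by
    funext x; rw [RCLike.inner_apply]
  rwa [heq] at h

lemma pairing_le (m u : HH n) :
    ENNReal.ofReal ‖∫ x, (u : XX n → ℂ) x * (starRingEnd ℂ) ((m : XX n → ℂ) x)‖ ≤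
      ∫⁻ x, Wfn m x * Wfn u x := by
  calc ENNReal.ofReal ‖∫ x, (u : XX n → ℂ) x * (starRingEnd ℂ) ((m : XX n → ℂ) x)‖
      = (‖∫ x, (u : XX n → ℂ) x * (starRingEnd ℂ) ((m : XX n → ℂ) x)‖₊ : ℝ≥0∞) :=
        ofReal_norm_eq_enorm _
    _ ≤ ∫⁻ x, (‖(u : XX n → ℂ) x * (starRingEnd ℂ) ((m : XX n → ℂ) x)‖₊ : ℝ≥0∞) :=
        MeasureTheory.enorm_integral_le_lintegral_enorm _
    _ = ∫⁻ x, Wfn m x * Wfn u x := lintegral_congr fun x => by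
        simp [Wfn, nnnorm_mul, ENNReal.coe_mul, RCLike.nnnorm_conj, mul_comm]

lemma pairing_split (m u v : HH n) :
    ENNReal.ofReal ‖∫ x, (u : XX n → ℂ) x * (starRingEnd ℂ) ((m : XX n → ℂ) x)‖ ≤
      (∫⁻ x, Wfn m x * Wfn (u - v) x) +
      ENNReal.ofReal ‖∫ x, (v : XX n → ℂ) x * (starRingEnd ℂ) ((m : XX n → ℂ) x)‖ := by
  have hsub := MeasureTheory.Lp.coeFn_sub u v
  have h1 : ∫ x, ((u - v : HH n) : XX n → ℂ) x * (starRingEnd ℂ) ((m : XX n → ℂ) x) =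
      (∫ x, (u : XX n → ℂ) x * (starRingEnd ℂ) ((m : XX n → ℂ) x)) -
      ∫ x, (v : XX n → ℂ) x * (starRingEnd ℂ) ((m : XX n → ℂ) x) := by
    rw [← integral_sub (pairing_integrable m u) (pairing_integrable m v)]
    apply integral_congr_ae
    filter_upwards [hsub] with x hx
    rw [hx, Pi.sub_apply]
    ring
  have h3 : (∫ x, (u : XX n → ℂ) x * (starRingEnd ℂ) ((m : XX n → ℂ) x)) =
      (∫ x, ((u - v : HH n) : XX n → ℂ) x * (starRingEnd ℂ) ((m : XX n → ℂ) x)) +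
      ∫ x, (v : XX n → ℂ) x * (starRingEnd ℂ) ((m : XX n → ℂ) x) := by
    rw [h1]; ring
  calc ENNReal.ofReal ‖∫ x, (u : XX n → ℂ) x * (starRingEnd ℂ) ((m : XX n → ℂ) x)‖
      ≤ ENNReal.ofReal
          (‖∫ x, ((u - v : HH n) : XX n → ℂ) x * (starRingEnd ℂ) ((m : XX n → ℂ) x)‖ +
           ‖∫ x, (v : XX n → ℂ) x * (starRingEnd ℂ) ((m : XX n → ℂ) x)‖) := by
        apply ENNReal.ofReal_le_ofReal
        rw [h3]; exact norm_add_le _ _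
    _ ≤ ENNReal.ofReal ‖∫ x, ((u - v : HH n) : XX n → ℂ) x * (starRingEnd ℂ) ((m : XX n → ℂ) x)‖ +
        ENNReal.ofReal ‖∫ x, (v : XX n → ℂ) x * (starRingEnd ℂ) ((m : XX n → ℂ) x)‖ :=
        ENNReal.ofReal_add_le
    _ ≤ (∫⁻ x, Wfn m x * Wfn (u - v) x) +
        ENNReal.ofReal ‖∫ x, (v : XX n → ℂ) x * (starRingEnd ℂ) ((m : XX n → ℂ) x)‖ :=
        add_le_add_left (pairing_le m (u - v)) _

lemma smooth_pointwise {C₀ c₀ : ℝ} (hC₀ : 0 < C₀) (hc₀ : 0 < c₀) (D : HeatData n C₀ c₀)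
    {t : ℝ} (ht : 0 < t) (g : HH n) {c : ℕ → ℝ≥0∞}
    (hc : ∀ (x : XX n) (l : ℕ), ∫⁻ y in ball x ((2:ℝ)^l * Real.sqrt t), Wfn g y ≤ c l) :
    ∀ᵐ x : XX n, Wfn (D.T t g) x ≤
      ENNReal.ofReal (C₀ * t ^ (-(n:ℝ)/2)) * ∑' l, gam c₀ l * c l := by
  filter_upwards [kernel_pointwise hC₀ D ht g] with x hx
  refine hx.trans (mul_le_mul_right ?_ _)
  refine (gauss_annuli hc₀ ht x (Wfn_aemeas g)).trans ?_
  exact ENNReal.tsum_le_tsum fun l => mul_le_mul_right (hc x l) _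

lemma lintegral_mul_le_of_ae_bound {m g : XX n → ℝ≥0∞}
    (hm : AEMeasurable m (volume : Measure (XX n))) {c : ℝ≥0∞}
    (hbd : ∀ᵐ x : XX n, g x ≤ c) : ∫⁻ x, m x * g x ≤ (∫⁻ x, m x) * c := by
  calc ∫⁻ x, m x * g x ≤ ∫⁻ x, m x * c := lintegral_mono_ae (by
        filter_upwards [hbd] with x hx; exact mul_le_mul_right hx _)
    _ = (∫⁻ x, m x) * c := lintegral_mul_const'' c hm

lemma e1 {σ : ℝ} (hσ : 0 < σ) (n l : ℕ) :
    (((2:ℝ)^l * σ)^n) ^ ((1:ℝ)/2) = (2:ℝ) ^ ((l:ℝ)*(n:ℝ)/2) * σ ^ ((n:ℝ)/2) := by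
  rw [← Real.rpow_natCast ((2:ℝ)^l * σ) n, ← Real.rpow_mul (by positivity),
    Real.mul_rpow (by positivity) hσ.le, ← Real.rpow_natCast (2:ℝ) l,
    ← Real.rpow_mul (by norm_num)]
  ring_nf

lemma e2 (n l : ℕ) :
    ((((2:ℝ)^(l+1))^n) : ℝ) ^ ((1:ℝ)/2) = (2:ℝ) ^ (((l:ℝ)+1)*(n:ℝ)/2) := by
  rw [← Real.rpow_natCast ((2:ℝ)^(l+1)) n, ← Real.rpow_mul (by positivity),
    ← Real.rpow_natCast (2:ℝ) (l+1), ← Real.rpow_mul (by norm_num)]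
  push_cast
  ring_nf

lemma e3 {σ lam : ℝ} (hσ : 0 < σ) :
    ((Real.sqrt 3 * σ) ^ lam) ^ ((1:ℝ)/2) = (3:ℝ) ^ (lam/4) * σ ^ (lam/2) := by
  rw [← Real.rpow_mul (by positivity), Real.mul_rpow (Real.sqrt_nonneg 3) hσ.le,
    Real.sqrt_eq_rpow, ← Real.rpow_mul (by norm_num : (0:ℝ) ≤ 3)]
  ring_nf

lemma ralg1 {σ lam : ℝ} (hσ : 0 < σ) (n l : ℕ) :
    (((2:ℝ)^l * σ)^n) ^ ((1:ℝ)/2) *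
      (((((2:ℝ)^(l+1))^n) : ℝ) ^ ((1:ℝ)/2) * ((Real.sqrt 3 * σ) ^ lam) ^ ((1:ℝ)/2)) =
    (2:ℝ) ^ ((l:ℝ)*(n:ℝ)) * ((2:ℝ) ^ ((n:ℝ)/2) * (3:ℝ) ^ (lam/4) * σ ^ (((n:ℝ)+lam)/2)) := by
  rw [e1 hσ, e2, e3 hσ]
  have h2 : (0:ℝ) < 2 := by norm_num
  calc (2:ℝ)^((l:ℝ)*(n:ℝ)/2) * σ^((n:ℝ)/2) *
        ((2:ℝ)^(((l:ℝ)+1)*(n:ℝ)/2) * ((3:ℝ)^(lam/4) * σ^(lam/2)))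
      = ((2:ℝ)^((l:ℝ)*(n:ℝ)/2) * (2:ℝ)^(((l:ℝ)+1)*(n:ℝ)/2)) * (3:ℝ)^(lam/4) *
        (σ^((n:ℝ)/2) * σ^(lam/2)) := by ring
    _ = (2:ℝ)^((l:ℝ)*(n:ℝ)/2 + ((l:ℝ)+1)*(n:ℝ)/2) * (3:ℝ)^(lam/4) *
        σ^((n:ℝ)/2 + lam/2) := by rw [← Real.rpow_add h2, ← Real.rpow_add hσ]
    _ = (2:ℝ)^((l:ℝ)*(n:ℝ) + (n:ℝ)/2) * (3:ℝ)^(lam/4) * σ^(((n:ℝ)+lam)/2) := by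
        ring_nf
    _ = (2:ℝ) ^ ((l:ℝ)*(n:ℝ)) * ((2:ℝ) ^ ((n:ℝ)/2) * (3:ℝ) ^ (lam/4) * σ ^ (((n:ℝ)+lam)/2)) := by
        rw [Real.rpow_add h2]; ring

lemma ralg2 {σ : ℝ} (hσ : 0 < σ) (c : ℝ) (nr : ℝ) :
    ((σ^2 : ℝ)) ^ (-(nr)/2) * σ ^ c = σ ^ (c - nr) := by
  rw [← Real.rpow_natCast σ 2, ← Real.rpow_mul hσ.le, ← Real.rpow_add hσ]
  ring_nf

lemma smooth_camp_bound {C₀ c₀ : ℝ} (hn : 1 ≤ n) (hC₀ : 0 < C₀) (hc₀ : 0 < c₀)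
    (D : HeatData n C₀ c₀) (lam : ℝ) (f : HH n) {σ : ℝ} (hσ : 0 < σ) :
    ∀ᵐ x : XX n, Wfn (D.T (σ^2) (f - D.T ((Real.sqrt 3 * σ)^2) f)) x ≤
      (ENNReal.ofReal (C₀ * (3:ℝ)^(lam/4) * (2:ℝ)^((n:ℝ)/2)) *
        (volume (ball (0:XX n) 1)) ^ ((1:ℝ)/2) *
        (∑' l : ℕ, gam c₀ l * ENNReal.ofReal ((2:ℝ)^((l:ℝ)*(n:ℝ))))) *
      (campNorm D lam f * ENNReal.ofReal (σ ^ ((lam - (n:ℝ))/2))) := by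
  set v1 := volume (ball (0:XX n) 1) with hv1
  set K := campNorm D lam f with hKd
  set ρ := Real.sqrt 3 * σ with hρdef
  have h3' : 0 < Real.sqrt 3 := Real.sqrt_pos.2 (by norm_num)
  have hρ : 0 < ρ := by rw [hρdef]; positivity
  set g := f - D.T (ρ^2) f with hg
  have ht : 0 < σ^2 := by positivity
  have hsq : Real.sqrt (σ^2) = σ := Real.sqrt_sq hσ.le
  have hS : ∀ z : XX n, ∫⁻ x in ball z ρ, Wfn g x ^ 2 ≤ K^2 * ENNReal.ofReal (ρ^lam) :=
    fun z => camp_ball D lam f z hρ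
  set c : ℕ → ℝ≥0∞ := fun l =>
    (ENNReal.ofReal (((2:ℝ)^l * σ)^(n:ℝ)) * v1) ^ ((1:ℝ)/2) *
    ((ENNReal.ofReal (((((2:ℝ)^(l+1))^n) : ℝ)) * (K^2 * ENNReal.ofReal (ρ^lam))) ^ ((1:ℝ)/2))
    with hc_def
  have hcov : ∀ (x : XX n) (l : ℕ),
      ∫⁻ y in ball x ((2:ℝ)^l * Real.sqrt (σ^2)), Wfn g y ≤ c l := by
    intro x l
    rw [hsq]
    have h2l : (0:ℝ) < (2:ℝ)^l * σ := by positivity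
    have hcov2 : ∫⁻ y in ball x ((2:ℝ)^l * σ), Wfn g y ^ 2 ≤
        ENNReal.ofReal (((2:ℝ)^(l+1))^n) * (K^2 * ENNReal.ofReal (ρ^lam)) := by
      have h1 := le_covering hn ((Wfn_aemeas g).pow_const 2) hρ h2l hS x
      refine h1.trans (mul_le_mul_left (ENNReal.ofReal_le_ofReal ?_) _)
      have hσρ : σ ≤ ρ := by
        rw [hρdef]
        nlinarith [Real.sq_sqrt (by norm_num : (0:ℝ) ≤ 3)]
      have h1l : (1:ℝ) ≤ (2:ℝ)^l := one_le_pow₀ one_le_two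
      apply pow_le_pow_left₀ (by positivity)
      rw [div_le_iff₀ hρ]
      have he : (2:ℝ)^(l+1) = 2 * 2^l := by ring
      nlinarith [mul_le_mul_of_nonneg_left hσρ (le_of_lt (pow_pos two_pos l))]
    calc ∫⁻ y in ball x ((2:ℝ)^l * σ), Wfn g y
        ≤ (volume (ball x ((2:ℝ)^l * σ))) ^ ((1:ℝ)/2) *
          (∫⁻ y in ball x ((2:ℝ)^l * σ), Wfn g y ^ 2) ^ ((1:ℝ)/2) :=
          lintegral_le_sqrt_mul _ (Wfn_aemeas g) _
      _ ≤ c l := by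
          rw [hc_def, ball_vol hn x h2l.le]
          exact mul_le_mul (le_refl _) (ENNReal.rpow_le_rpow hcov2 (by norm_num))
            (zero_le) (zero_le)
  have hK2 : ((K^2 : ℝ≥0∞)) ^ ((1:ℝ)/2) = K := by
    rw [← ENNReal.rpow_natCast K 2, ← ENNReal.rpow_mul]; norm_num
  have hcl : ∀ l : ℕ, gam c₀ l * c l =
      (gam c₀ l * ENNReal.ofReal ((2:ℝ)^((l:ℝ)*(n:ℝ)))) *
      (ENNReal.ofReal ((2:ℝ)^((n:ℝ)/2) * (3:ℝ)^(lam/4) * σ^(((n:ℝ)+lam)/2)) *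
        (v1 ^ ((1:ℝ)/2) * K)) := by
    intro l
    have hApos : (0:ℝ) < ((2:ℝ)^l * σ)^(n:ℝ) := Real.rpow_pos_of_pos (by positivity) _
    have hBpos : (0:ℝ) < (((2:ℝ)^(l+1))^n : ℝ) := by positivity
    have hCpos : (0:ℝ) < ρ^lam := Real.rpow_pos_of_pos hρ _
    have ex1 : (ENNReal.ofReal (((2:ℝ)^l * σ)^(n:ℝ)) * v1) ^ ((1:ℝ)/2) =
        ENNReal.ofReal ((((2:ℝ)^l * σ)^(n:ℝ)) ^ ((1:ℝ)/2)) * v1 ^ ((1:ℝ)/2) := by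
      rw [ENNReal.mul_rpow_of_nonneg _ _ (by norm_num),
        ENNReal.ofReal_rpow_of_pos hApos]
    have ex2 : (ENNReal.ofReal (((((2:ℝ)^(l+1))^n) : ℝ)) * (K^2 * ENNReal.ofReal (ρ^lam)))
        ^ ((1:ℝ)/2) =
        ENNReal.ofReal (((((2:ℝ)^(l+1))^n : ℝ)) ^ ((1:ℝ)/2)) *
          (K * ENNReal.ofReal ((ρ^lam) ^ ((1:ℝ)/2))) := by
      rw [ENNReal.mul_rpow_of_nonneg _ _ (by norm_num),
        ENNReal.mul_rpow_of_nonneg _ _ (by norm_num), hK2,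
        ENNReal.ofReal_rpow_of_pos hBpos, ENNReal.ofReal_rpow_of_pos hCpos]
    have hsc : (((2:ℝ)^l * σ)^(n:ℝ)) ^ ((1:ℝ)/2) *
        ((((((2:ℝ)^(l+1))^n) : ℝ)) ^ ((1:ℝ)/2) * ((ρ:ℝ) ^ lam) ^ ((1:ℝ)/2)) =
        (2:ℝ)^((l:ℝ)*(n:ℝ)) *
          ((2:ℝ)^((n:ℝ)/2) * (3:ℝ)^(lam/4) * σ^(((n:ℝ)+lam)/2)) := by
      rw [Real.rpow_natCast ((2:ℝ)^l * σ) n, hρdef]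
      exact ralg1 hσ n l
    have ex3 : ENNReal.ofReal ((((2:ℝ)^l * σ)^(n:ℝ)) ^ ((1:ℝ)/2)) *
        (ENNReal.ofReal (((((2:ℝ)^(l+1))^n : ℝ)) ^ ((1:ℝ)/2)) *
         ENNReal.ofReal ((ρ^lam) ^ ((1:ℝ)/2))) =
        ENNReal.ofReal ((2:ℝ)^((l:ℝ)*(n:ℝ))) *
        ENNReal.ofReal ((2:ℝ)^((n:ℝ)/2) * (3:ℝ)^(lam/4) * σ^(((n:ℝ)+lam)/2)) := by
      rw [← ENNReal.ofReal_mul (by positivity), ← ENNReal.ofReal_mul (by positivity), hsc,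
        ENNReal.ofReal_mul (by positivity)]
    calc gam c₀ l * c l
        = gam c₀ l * ((ENNReal.ofReal ((((2:ℝ)^l * σ)^(n:ℝ)) ^ ((1:ℝ)/2)) *
            (ENNReal.ofReal (((((2:ℝ)^(l+1))^n : ℝ)) ^ ((1:ℝ)/2)) *
             ENNReal.ofReal ((ρ^lam) ^ ((1:ℝ)/2)))) * (v1 ^ ((1:ℝ)/2) * K)) := by
          rw [hc_def]; simp only []; rw [ex1, ex2]; ring
      _ = (gam c₀ l * ENNReal.ofReal ((2:ℝ)^((l:ℝ)*(n:ℝ)))) *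
          (ENNReal.ofReal ((2:ℝ)^((n:ℝ)/2) * (3:ℝ)^(lam/4) * σ^(((n:ℝ)+lam)/2)) *
            (v1 ^ ((1:ℝ)/2) * K)) := by rw [ex3]; ring
  have hae := smooth_pointwise hC₀ hc₀ D ht g hcov
  filter_upwards [hae] with x hx
  refine hx.trans (le_of_eq ?_)
  rw [tsum_congr hcl, ENNReal.tsum_mul_right]
  have hscal : C₀ * ((σ^2 : ℝ)) ^ (-(n:ℝ)/2) *
      ((2:ℝ)^((n:ℝ)/2) * (3:ℝ)^(lam/4) * σ^(((n:ℝ)+lam)/2)) =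
      (C₀ * (3:ℝ)^(lam/4) * (2:ℝ)^((n:ℝ)/2)) * σ ^ ((lam - (n:ℝ))/2) := by
    have h := ralg2 hσ (((n:ℝ)+lam)/2) (n:ℝ)
    calc C₀ * ((σ^2 : ℝ)) ^ (-(n:ℝ)/2) *
        ((2:ℝ)^((n:ℝ)/2) * (3:ℝ)^(lam/4) * σ^(((n:ℝ)+lam)/2))
        = C₀ * ((2:ℝ)^((n:ℝ)/2) * (3:ℝ)^(lam/4)) *
          (((σ^2 : ℝ)) ^ (-(n:ℝ)/2) * σ^(((n:ℝ)+lam)/2)) := by ring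
      _ = C₀ * ((2:ℝ)^((n:ℝ)/2) * (3:ℝ)^(lam/4)) * σ ^ (((n:ℝ)+lam)/2 - (n:ℝ)) := by rw [h]
      _ = (C₀ * (3:ℝ)^(lam/4) * (2:ℝ)^((n:ℝ)/2)) * σ ^ ((lam - (n:ℝ))/2) := by
          rw [show (((n:ℝ)+lam)/2 - (n:ℝ)) = (lam - (n:ℝ))/2 by ring]; ring
  have hC0σ : (0:ℝ) ≤ C₀ * ((σ^2 : ℝ)) ^ (-(n:ℝ)/2) := by positivity
  calc ENNReal.ofReal (C₀ * (σ^2) ^ (-(n:ℝ)/2)) *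
      ((∑' l : ℕ, gam c₀ l * ENNReal.ofReal ((2:ℝ)^((l:ℝ)*(n:ℝ)))) *
        (ENNReal.ofReal ((2:ℝ)^((n:ℝ)/2) * (3:ℝ)^(lam/4) * σ^(((n:ℝ)+lam)/2)) *
          (v1 ^ ((1:ℝ)/2) * K)))
      = (ENNReal.ofReal (C₀ * (σ^2) ^ (-(n:ℝ)/2)) *
          ENNReal.ofReal ((2:ℝ)^((n:ℝ)/2) * (3:ℝ)^(lam/4) * σ^(((n:ℝ)+lam)/2))) *
        ((∑' l : ℕ, gam c₀ l * ENNReal.ofReal ((2:ℝ)^((l:ℝ)*(n:ℝ)))) *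
          (v1 ^ ((1:ℝ)/2) * K)) := by ring
    _ = (ENNReal.ofReal (C₀ * (3:ℝ)^(lam/4) * (2:ℝ)^((n:ℝ)/2)) *
          ENNReal.ofReal (σ ^ ((lam - (n:ℝ))/2))) *
        ((∑' l : ℕ, gam c₀ l * ENNReal.ofReal ((2:ℝ)^((l:ℝ)*(n:ℝ)))) *
          (v1 ^ ((1:ℝ)/2) * K)) := by
        rw [← ENNReal.ofReal_mul hC0σ, hscal, ENNReal.ofReal_mul (by positivity)]
    _ = (ENNReal.ofReal (C₀ * (3:ℝ)^(lam/4) * (2:ℝ)^((n:ℝ)/2)) * v1 ^ ((1:ℝ)/2) *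
          (∑' l : ℕ, gam c₀ l * ENNReal.ofReal ((2:ℝ)^((l:ℝ)*(n:ℝ))))) *
        (K * ENNReal.ofReal (σ ^ ((lam - (n:ℝ))/2))) := by ring

lemma smooth_global_bound {C₀ c₀ : ℝ} (hn : 1 ≤ n) (hC₀ : 0 < C₀) (hc₀ : 0 < c₀)
    (D : HeatData n C₀ c₀) (f : HH n) {σ : ℝ} (hσ : 0 < σ) :
    ∀ᵐ x : XX n, Wfn (D.T (σ^2) f) x ≤
      (ENNReal.ofReal C₀ * (volume (ball (0:XX n) 1)) ^ ((1:ℝ)/2) *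
        (∑' l : ℕ, gam c₀ l * ENNReal.ofReal ((2:ℝ)^((l:ℝ)*((n:ℝ)/2)))) *
        (∫⁻ x : XX n, Wfn f x ^ 2) ^ ((1:ℝ)/2)) * ENNReal.ofReal (σ ^ (-(n:ℝ)/2)) := by
  set v1 := volume (ball (0:XX n) 1) with hv1
  set Nf := (∫⁻ x : XX n, Wfn f x ^ 2) ^ ((1:ℝ)/2) with hNf
  have ht : 0 < σ^2 := by positivity
  set c : ℕ → ℝ≥0∞ := fun l =>
    (ENNReal.ofReal (((2:ℝ)^l * σ)^(n:ℝ)) * v1) ^ ((1:ℝ)/2) * Nf with hc_def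
  have hcov : ∀ (x : XX n) (l : ℕ),
      ∫⁻ y in ball x ((2:ℝ)^l * Real.sqrt (σ^2)), Wfn f y ≤ c l := by
    intro x l
    rw [Real.sqrt_sq hσ.le]
    have h2l : (0:ℝ) < (2:ℝ)^l * σ := by positivity
    calc ∫⁻ y in ball x ((2:ℝ)^l * σ), Wfn f y
        ≤ (volume (ball x ((2:ℝ)^l * σ))) ^ ((1:ℝ)/2) *
          (∫⁻ y in ball x ((2:ℝ)^l * σ), Wfn f y ^ 2) ^ ((1:ℝ)/2) :=
          lintegral_le_sqrt_mul _ (Wfn_aemeas f) _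
      _ ≤ c l := by
          rw [hc_def, ball_vol hn x h2l.le]
          exact mul_le_mul (le_refl _)
            (ENNReal.rpow_le_rpow (setLIntegral_le_lintegral _ _) (by norm_num))
            (zero_le) (zero_le)
  have hcl : ∀ l : ℕ, gam c₀ l * c l =
      (gam c₀ l * ENNReal.ofReal ((2:ℝ)^((l:ℝ)*((n:ℝ)/2)))) *
      (ENNReal.ofReal (σ^((n:ℝ)/2)) * (v1 ^ ((1:ℝ)/2) * Nf)) := by
    intro l
    have hApos : (0:ℝ) < ((2:ℝ)^l * σ)^(n:ℝ) := Real.rpow_pos_of_pos (by positivity) _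
    have ex1 : (ENNReal.ofReal (((2:ℝ)^l * σ)^(n:ℝ)) * v1) ^ ((1:ℝ)/2) =
        ENNReal.ofReal ((((2:ℝ)^l * σ)^(n:ℝ)) ^ ((1:ℝ)/2)) * v1 ^ ((1:ℝ)/2) := by
      rw [ENNReal.mul_rpow_of_nonneg _ _ (by norm_num), ENNReal.ofReal_rpow_of_pos hApos]
    have hsc : ((((2:ℝ)^l * σ)^(n:ℝ)) ^ ((1:ℝ)/2)) =
        (2:ℝ)^((l:ℝ)*((n:ℝ)/2)) * σ^((n:ℝ)/2) := by
      rw [Real.rpow_natCast ((2:ℝ)^l * σ) n, e1 hσ]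
      rw [show (l:ℝ)*(n:ℝ)/2 = (l:ℝ)*((n:ℝ)/2) by ring]
    rw [hc_def]
    simp only []
    rw [ex1, hsc, ENNReal.ofReal_mul (by positivity)]
    ring
  have hae := smooth_pointwise hC₀ hc₀ D ht f hcov
  filter_upwards [hae] with x hx
  refine hx.trans (le_of_eq ?_)
  rw [tsum_congr hcl, ENNReal.tsum_mul_right]
  have hscal : C₀ * ((σ^2 : ℝ)) ^ (-(n:ℝ)/2) * σ^((n:ℝ)/2) = C₀ * σ ^ (-(n:ℝ)/2) := by
    have h := ralg2 hσ ((n:ℝ)/2) (n:ℝ)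
    calc C₀ * ((σ^2 : ℝ)) ^ (-(n:ℝ)/2) * σ^((n:ℝ)/2)
        = C₀ * (((σ^2 : ℝ)) ^ (-(n:ℝ)/2) * σ^((n:ℝ)/2)) := by ring
      _ = C₀ * σ ^ ((n:ℝ)/2 - (n:ℝ)) := by rw [h]
      _ = C₀ * σ ^ (-(n:ℝ)/2) := by rw [show ((n:ℝ)/2 - (n:ℝ)) = -(n:ℝ)/2 by ring]
  calc ENNReal.ofReal (C₀ * (σ^2) ^ (-(n:ℝ)/2)) *
      ((∑' l : ℕ, gam c₀ l * ENNReal.ofReal ((2:ℝ)^((l:ℝ)*((n:ℝ)/2)))) *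
        (ENNReal.ofReal (σ^((n:ℝ)/2)) * (v1 ^ ((1:ℝ)/2) * Nf)))
      = (ENNReal.ofReal (C₀ * (σ^2) ^ (-(n:ℝ)/2)) * ENNReal.ofReal (σ^((n:ℝ)/2))) *
        ((∑' l : ℕ, gam c₀ l * ENNReal.ofReal ((2:ℝ)^((l:ℝ)*((n:ℝ)/2)))) *
          (v1 ^ ((1:ℝ)/2) * Nf)) := by ring
    _ = (ENNReal.ofReal C₀ * ENNReal.ofReal (σ ^ (-(n:ℝ)/2))) *
        ((∑' l : ℕ, gam c₀ l * ENNReal.ofReal ((2:ℝ)^((l:ℝ)*((n:ℝ)/2)))) *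
          (v1 ^ ((1:ℝ)/2) * Nf)) := by
        rw [← ENNReal.ofReal_mul (by positivity), hscal, ENNReal.ofReal_mul hC₀.le]
    _ = (ENNReal.ofReal C₀ * v1 ^ ((1:ℝ)/2) *
          (∑' l : ℕ, gam c₀ l * ENNReal.ofReal ((2:ℝ)^((l:ℝ)*((n:ℝ)/2)))) * Nf) *
        ENNReal.ofReal (σ ^ (-(n:ℝ)/2)) := by ring

lemma ralg3 {r lam ε' : ℝ} (hr : 0 < r) (n j : ℕ) :
    ((2:ℝ)^(-(j:ℝ)*ε') * ((2:ℝ)^((j:ℝ)) * r)^(-(lam/2))) *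
      (((((2:ℝ)^(j+1))^n : ℝ)) ^ ((1:ℝ)/2) * (r ^ lam) ^ ((1:ℝ)/2)) =
    (2:ℝ)^((n:ℝ)/2) * (2:ℝ)^(-(j:ℝ)*(ε' + lam/2 - (n:ℝ)/2)) := by
  have h2j : (0:ℝ) < (2:ℝ)^((j:ℝ)) := Real.rpow_pos_of_pos two_pos _
  rw [e2, ← Real.rpow_mul hr.le, Real.mul_rpow h2j.le hr.le,
    ← Real.rpow_mul (by norm_num : (0:ℝ) ≤ 2)]
  calc (2:ℝ)^(-(j:ℝ)*ε') * ((2:ℝ)^((j:ℝ)*(-(lam/2))) * r^(-(lam/2))) *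
        ((2:ℝ)^(((j:ℝ)+1)*(n:ℝ)/2) * r^(lam*((1:ℝ)/2)))
      = ((2:ℝ)^(-(j:ℝ)*ε') * (2:ℝ)^((j:ℝ)*(-(lam/2))) * (2:ℝ)^(((j:ℝ)+1)*(n:ℝ)/2)) *
        (r^(-(lam/2)) * r^(lam*((1:ℝ)/2))) := by ring
    _ = (2:ℝ)^(-(j:ℝ)*ε' + (j:ℝ)*(-(lam/2)) + ((j:ℝ)+1)*(n:ℝ)/2) *
        r^(-(lam/2) + lam*((1:ℝ)/2)) := by
        rw [← Real.rpow_add two_pos, ← Real.rpow_add two_pos, ← Real.rpow_add hr]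
    _ = (2:ℝ)^((n:ℝ)/2) * (2:ℝ)^(-(j:ℝ)*(ε' + lam/2 - (n:ℝ)/2)) := by
        rw [show -(lam/2) + lam*((1:ℝ)/2) = 0 by ring, Real.rpow_zero, mul_one,
          show (-(j:ℝ)*ε' + (j:ℝ)*(-(lam/2)) + ((j:ℝ)+1)*(n:ℝ)/2) =
            (n:ℝ)/2 + (-(j:ℝ)*(ε' + lam/2 - (n:ℝ)/2)) by ring,
          Real.rpow_add two_pos]

lemma ralg4 {r lam ε' : ℝ} (hr : 0 < r) (n j : ℕ) :
    (((2:ℝ)^((j:ℝ)) * r)^(n:ℝ)) ^ ((1:ℝ)/2) *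
      ((2:ℝ)^(-(j:ℝ)*ε') * ((2:ℝ)^((j:ℝ)) * r)^(-(lam/2))) =
    (2:ℝ)^(-(j:ℝ)*(ε' + lam/2 - (n:ℝ)/2)) * r^(((n:ℝ)-lam)/2) := by
  have h2j : (0:ℝ) < (2:ℝ)^((j:ℝ)) := Real.rpow_pos_of_pos two_pos _
  have hx : (0:ℝ) < (2:ℝ)^((j:ℝ)) * r := mul_pos h2j hr
  rw [← Real.rpow_mul hx.le, Real.mul_rpow h2j.le hr.le, Real.mul_rpow h2j.le hr.le,
    ← Real.rpow_mul (by norm_num : (0:ℝ) ≤ 2), ← Real.rpow_mul (by norm_num : (0:ℝ) ≤ 2)]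
  calc (2:ℝ)^((j:ℝ)*((n:ℝ)*((1:ℝ)/2))) * r^((n:ℝ)*((1:ℝ)/2)) *
        ((2:ℝ)^(-(j:ℝ)*ε') * ((2:ℝ)^((j:ℝ)*(-(lam/2))) * r^(-(lam/2))))
      = ((2:ℝ)^((j:ℝ)*((n:ℝ)*((1:ℝ)/2))) * (2:ℝ)^(-(j:ℝ)*ε') * (2:ℝ)^((j:ℝ)*(-(lam/2)))) *
        (r^((n:ℝ)*((1:ℝ)/2)) * r^(-(lam/2))) := by ring
    _ = (2:ℝ)^((j:ℝ)*((n:ℝ)*((1:ℝ)/2)) + -(j:ℝ)*ε' + (j:ℝ)*(-(lam/2))) *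
        r^((n:ℝ)*((1:ℝ)/2) + -(lam/2)) := by
        rw [← Real.rpow_add two_pos, ← Real.rpow_add two_pos, ← Real.rpow_add hr]
    _ = (2:ℝ)^(-(j:ℝ)*(ε' + lam/2 - (n:ℝ)/2)) * r^(((n:ℝ)-lam)/2) := by
        rw [show ((j:ℝ)*((n:ℝ)*((1:ℝ)/2)) + -(j:ℝ)*ε' + (j:ℝ)*(-(lam/2))) =
            -(j:ℝ)*(ε' + lam/2 - (n:ℝ)/2) by ring,
          show ((n:ℝ)*((1:ℝ)/2) + -(lam/2)) = ((n:ℝ)-lam)/2 by ring]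

lemma ralg5 {r : ℝ} (hr : 0 < r) (nr lam : ℝ) (i : ℕ) :
    ((2:ℝ)^i * r) ^ ((lam - nr)/2) =
      (2:ℝ)^(-(i:ℝ)*((nr-lam)/2)) * r^((lam-nr)/2) := by
  have h2i : (0:ℝ) < (2:ℝ)^i := pow_pos two_pos i
  rw [Real.mul_rpow h2i.le hr.le, ← Real.rpow_natCast (2:ℝ) i,
    ← Real.rpow_mul (by norm_num : (0:ℝ) ≤ 2),
    show (i:ℝ)*((lam-nr)/2) = -(i:ℝ)*((nr-lam)/2) by ring]

end HelperDev

open Metric Set MeasureTheory Filter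

theorem statement16 (n : ℕ) (hn : 1 ≤ n) (lam : ℝ) (hlam0 : 0 < lam) (hlamn : lam < n)
    (C₀ c₀ : ℝ) (hC₀ : 0 < C₀) (hc₀ : 0 < c₀) (ε : ℝ) (hε : ((n : ℝ) - lam) / 2 < ε) :
    ∃ C : ℝ, 0 < C ∧ ∀ (D : HeatData n C₀ c₀) (f : HH n), campNorm D lam f < ∞ →
      ∀ m : HH n, IsOpMolecule D 1 lam ε m →
        ENNReal.ofReal ‖∫ x, (f : XX n → ℂ) x * conj ((m : XX n → ℂ) x)‖ ≤
          ENNReal.ofReal C * campNorm D lam f := by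
  classical
  set v1 : ℝ≥0∞ := volume (ball (0:XX n) 1) with hv1d
  have hv1t : v1 ≠ ⊤ := measure_ball_lt_top.ne
  have hv1h : v1 ^ ((1:ℝ)/2) ≠ ⊤ := ENNReal.rpow_ne_top_of_nonneg (by norm_num) hv1t
  have ha : (0:ℝ) < ε + lam/2 - (n:ℝ)/2 := by linarith
  set SA : ℝ≥0∞ := ∑' j : ℕ, ENNReal.ofReal ((2:ℝ) ^ (-(j:ℝ) * (ε + lam/2 - (n:ℝ)/2)))
    with hSAd
  have hSAt : SA ≠ ⊤ := geom_ofReal_tsum_ne_top ha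
  set SB : ℝ≥0∞ := ∑' i : ℕ, ENNReal.ofReal ((2:ℝ) ^ (-(i:ℝ) * (((n:ℝ) - lam)/2))) with hSBd
  have hSBt : SB ≠ ⊤ := geom_ofReal_tsum_ne_top (by linarith)
  set G2 : ℝ≥0∞ := ∑' l : ℕ, gam c₀ l * ENNReal.ofReal ((2:ℝ)^((l:ℝ)*(n:ℝ))) with hG2d
  have hG2t : G2 ≠ ⊤ := gam_tsum_ne_top hc₀ _
  set G1 : ℝ≥0∞ := ∑' l : ℕ, gam c₀ l * ENNReal.ofReal ((2:ℝ)^((l:ℝ)*((n:ℝ)/2))) with hG1d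
  have hG1t : G1 ≠ ⊤ := gam_tsum_ne_top hc₀ _
  set CB : ℝ≥0∞ := ENNReal.ofReal (C₀ * (3:ℝ)^(lam/4) * (2:ℝ)^((n:ℝ)/2)) * v1 ^ ((1:ℝ)/2) * G2
    with hCBd
  have hCBt : CB ≠ ⊤ :=
    ENNReal.mul_ne_top (ENNReal.mul_ne_top ENNReal.ofReal_ne_top hv1h) hG2t
  set MW : ℝ≥0∞ := v1 ^ ((1:ℝ)/2) * SA with hMWd
  have hMWt : MW ≠ ⊤ := ENNReal.mul_ne_top hv1h hSAt
  set E : ℝ≥0∞ := ENNReal.ofReal ((2:ℝ)^((n:ℝ)/2)) * SA + MW * CB * SB with hEd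
  have hEt : E ≠ ⊤ := by
    rw [hEd]
    exact ENNReal.add_ne_top.2 ⟨ENNReal.mul_ne_top ENNReal.ofReal_ne_top hSAt,
      ENNReal.mul_ne_top (ENNReal.mul_ne_top hMWt hCBt) hSBt⟩
  refine ⟨E.toReal + 1, by positivity, fun D f hKfin m hmol => ?_⟩
  suffices hMain : ENNReal.ofReal ‖∫ x, (f : XX n → ℂ) x * conj ((m : XX n → ℂ) x)‖ ≤
      E * campNorm D lam f by
    refine hMain.trans (mul_le_mul_left ?_ _)
    calc E = ENNReal.ofReal E.toReal := (ENNReal.ofReal_toReal hEt).symm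
      _ ≤ ENNReal.ofReal (E.toReal + 1) := ENNReal.ofReal_le_ofReal (by linarith)
  obtain ⟨b, xB, r, hr, hbdom, hmb, hbnd⟩ := hmol
  set K := campNorm D lam f with hKd
  have hWm := Wfn_aemeas (n := n) m
  -- molecule L² bound on annuli
  have hmol2 : ∀ j : ℕ, (∫⁻ x in Uj n xB r j, Wfn m x ^ 2) ^ ((1:ℝ)/2) ≤
      ENNReal.ofReal ((2:ℝ)^(-(j:ℝ)*ε) * ((2:ℝ)^((j:ℝ)) * r)^(-(lam/2))) := by
    intro j
    have h := hbnd 1 le_rfl j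
    rw [← hmb] at h
    rw [mul_assoc, ENNReal.ofReal_mul (Real.rpow_nonneg hr.le _)] at h
    have h0 : ENNReal.ofReal (r ^ (2 * ((1:ℕ):ℝ))) ≠ 0 := by
      simp only [ne_eq, ENNReal.ofReal_eq_zero, not_le]
      exact Real.rpow_pos_of_pos hr _
    exact (ENNReal.mul_le_mul_iff_right h0 ENNReal.ofReal_ne_top).1 h
  -- molecule L¹ bound
  have hmolL1 : ∫⁻ x, Wfn m x ≤ MW * ENNReal.ofReal (r ^ (((n:ℝ) - lam)/2)) := by
    rw [lintegral_eq_tsum_Uj (Wfn m) xB hr]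
    have hle : ∀ j : ℕ, ∫⁻ x in Uj n xB r j, Wfn m x ≤
        ENNReal.ofReal ((2:ℝ)^(-(j:ℝ)*(ε + lam/2 - (n:ℝ)/2))) *
          (v1 ^ ((1:ℝ)/2) * ENNReal.ofReal (r ^ (((n:ℝ)-lam)/2))) := by
      intro j
      have hvol : volume (Uj n xB r j) ≤ ENNReal.ofReal (((2:ℝ)^((j:ℝ)) * r) ^ (n:ℝ)) * v1 := by
        refine (measure_mono (Uj_subset_ball xB r j)).trans ?_
        rw [ball_vol hn xB (by positivity : (0:ℝ) ≤ (2:ℝ)^j * r), ← Real.rpow_natCast (2:ℝ) j]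
      calc ∫⁻ x in Uj n xB r j, Wfn m x
          ≤ (volume (Uj n xB r j)) ^ ((1:ℝ)/2) *
            (∫⁻ x in Uj n xB r j, Wfn m x ^ 2) ^ ((1:ℝ)/2) :=
            lintegral_le_sqrt_mul _ hWm _
        _ ≤ (ENNReal.ofReal (((2:ℝ)^((j:ℝ)) * r) ^ (n:ℝ)) * v1) ^ ((1:ℝ)/2) *
            ENNReal.ofReal ((2:ℝ)^(-(j:ℝ)*ε) * ((2:ℝ)^((j:ℝ)) * r)^(-(lam/2))) :=
            mul_le_mul (ENNReal.rpow_le_rpow hvol (by norm_num)) (hmol2 j)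
              (zero_le) (zero_le)
        _ = ENNReal.ofReal ((((2:ℝ)^((j:ℝ)) * r) ^ (n:ℝ)) ^ ((1:ℝ)/2)) * v1 ^ ((1:ℝ)/2) *
            ENNReal.ofReal ((2:ℝ)^(-(j:ℝ)*ε) * ((2:ℝ)^((j:ℝ)) * r)^(-(lam/2))) := by
            rw [ENNReal.mul_rpow_of_nonneg _ _ (by norm_num),
              ENNReal.ofReal_rpow_of_pos
                (Real.rpow_pos_of_pos (by positivity) _)]
        _ = ENNReal.ofReal ((2:ℝ)^(-(j:ℝ)*(ε + lam/2 - (n:ℝ)/2))) *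
            (v1 ^ ((1:ℝ)/2) * ENNReal.ofReal (r ^ (((n:ℝ)-lam)/2))) := by
            rw [mul_comm (ENNReal.ofReal _) (v1 ^ ((1:ℝ)/2)), mul_assoc,
              ← ENNReal.ofReal_mul (by positivity), ralg4 hr n j,
              ENNReal.ofReal_mul (by positivity)]
            ring
    refine (ENNReal.tsum_le_tsum hle).trans (le_of_eq ?_)
    rw [ENNReal.tsum_mul_right, hMWd, hSAd]
    ring
  have hJmt : (∫⁻ x, Wfn m x) ≠ ⊤ :=
    ne_top_of_le_ne_top (ENNReal.mul_ne_top hMWt ENNReal.ofReal_ne_top) hmolL1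
  -- Term A
  have hTermA : (∫⁻ x, Wfn m x * Wfn (f - D.T (r^2) f) x) ≤
      ENNReal.ofReal ((2:ℝ)^((n:ℝ)/2)) * SA * K := by
    set g0 := f - D.T (r^2) f with hg0
    rw [lintegral_eq_tsum_Uj (fun x => Wfn m x * Wfn g0 x) xB hr]
    have hle : ∀ j : ℕ, ∫⁻ x in Uj n xB r j, Wfn m x * Wfn g0 x ≤
        ENNReal.ofReal ((2:ℝ)^(-(j:ℝ)*(ε + lam/2 - (n:ℝ)/2))) *
          (ENNReal.ofReal ((2:ℝ)^((n:ℝ)/2)) * K) := by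
      intro j
      have hCS := lintegral_CS (μ := (volume : Measure (XX n)).restrict (Uj n xB r j))
        hWm.restrict (Wfn_aemeas g0).restrict
      refine hCS.trans ?_
      have h2 : (∫⁻ x in Uj n xB r j, Wfn g0 x ^ 2) ≤
          ENNReal.ofReal (((2:ℝ)^(j+1))^n) * (K^2 * ENNReal.ofReal (r^lam)) := by
        refine (lintegral_mono_set (Uj_subset_ball xB r j)).trans ?_
        have hcov := le_covering hn ((Wfn_aemeas g0).pow_const 2) hr
          (by positivity : (0:ℝ) < (2:ℝ)^j * r)
          (fun z => camp_ball D lam f z hr) xB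
        refine hcov.trans (mul_le_mul_left (ENNReal.ofReal_le_ofReal ?_) _)
        apply pow_le_pow_left₀ (by positivity)
        rw [div_le_iff₀ hr]
        have h1l : (1:ℝ) ≤ (2:ℝ)^j := one_le_pow₀ one_le_two
        have he : (2:ℝ)^(j+1) = 2 * 2^j := by ring
        nlinarith
      have hK2 : ((K^2 : ℝ≥0∞)) ^ ((1:ℝ)/2) = K := by
        rw [← ENNReal.rpow_natCast K 2, ← ENNReal.rpow_mul]; norm_num
      have ex2 : (ENNReal.ofReal (((2:ℝ)^(j+1))^n) * (K^2 * ENNReal.ofReal (r^lam)))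
          ^ ((1:ℝ)/2) =
          ENNReal.ofReal ((((2:ℝ)^(j+1))^n : ℝ) ^ ((1:ℝ)/2)) *
            (K * ENNReal.ofReal ((r^lam) ^ ((1:ℝ)/2))) := by
        rw [ENNReal.mul_rpow_of_nonneg _ _ (by norm_num),
          ENNReal.mul_rpow_of_nonneg _ _ (by norm_num), hK2,
          ENNReal.ofReal_rpow_of_pos (by positivity),
          ENNReal.ofReal_rpow_of_pos (Real.rpow_pos_of_pos hr _)]
      calc (∫⁻ x in Uj n xB r j, Wfn m x ^ 2) ^ ((1:ℝ)/2) *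
            (∫⁻ x in Uj n xB r j, Wfn g0 x ^ 2) ^ ((1:ℝ)/2)
          ≤ ENNReal.ofReal ((2:ℝ)^(-(j:ℝ)*ε) * ((2:ℝ)^((j:ℝ)) * r)^(-(lam/2))) *
            ((ENNReal.ofReal (((2:ℝ)^(j+1))^n) * (K^2 * ENNReal.ofReal (r^lam)))
              ^ ((1:ℝ)/2)) :=
            mul_le_mul (hmol2 j) (ENNReal.rpow_le_rpow h2 (by norm_num))
              (zero_le) (zero_le)
        _ = ENNReal.ofReal (((2:ℝ)^(-(j:ℝ)*ε) * ((2:ℝ)^((j:ℝ)) * r)^(-(lam/2))) *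
              ((((2:ℝ)^(j+1))^n : ℝ) ^ ((1:ℝ)/2) * (r^lam) ^ ((1:ℝ)/2))) * K := by
            rw [ex2]
            calc ENNReal.ofReal ((2:ℝ)^(-(j:ℝ)*ε) * ((2:ℝ)^((j:ℝ)) * r)^(-(lam/2))) *
                (ENNReal.ofReal ((((2:ℝ)^(j+1))^n : ℝ) ^ ((1:ℝ)/2)) *
                  (K * ENNReal.ofReal ((r^lam) ^ ((1:ℝ)/2))))
                = ENNReal.ofReal ((2:ℝ)^(-(j:ℝ)*ε) * ((2:ℝ)^((j:ℝ)) * r)^(-(lam/2))) *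
                  (ENNReal.ofReal ((((2:ℝ)^(j+1))^n : ℝ) ^ ((1:ℝ)/2)) *
                   ENNReal.ofReal ((r^lam) ^ ((1:ℝ)/2))) * K := by ring
              _ = _ := by
                  rw [← ENNReal.ofReal_mul (by positivity),
                    ← ENNReal.ofReal_mul (by positivity)]
        _ = ENNReal.ofReal ((2:ℝ)^(-(j:ℝ)*(ε + lam/2 - (n:ℝ)/2))) *
            (ENNReal.ofReal ((2:ℝ)^((n:ℝ)/2)) * K) := by
            rw [ralg3 hr n j, ENNReal.ofReal_mul (by positivity)]
            ring
    refine (ENNReal.tsum_le_tsum hle).trans (le_of_eq ?_)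
    rw [ENNReal.tsum_mul_right, hSAd]
    ring
  -- Term B
  have hTermB : ∀ i : ℕ,
      (∫⁻ x, Wfn m x * Wfn (D.T (((2:ℝ)^i * r)^2) f - D.T (((2:ℝ)^(i+1) * r)^2) f) x) ≤
      MW * CB * ENNReal.ofReal ((2:ℝ)^(-(i:ℝ)*(((n:ℝ)-lam)/2))) * K := by
    intro i
    have hσ : (0:ℝ) < (2:ℝ)^i * r := by positivity
    have hdiff : D.T (((2:ℝ)^i * r)^2) f - D.T (((2:ℝ)^(i+1) * r)^2) f =
        D.T (((2:ℝ)^i * r)^2) (f - D.T ((Real.sqrt 3 * ((2:ℝ)^i * r))^2) f) := by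
      have h3 : (Real.sqrt 3 * ((2:ℝ)^i * r))^2 = 3 * ((2:ℝ)^i * r)^2 := by
        rw [mul_pow, Real.sq_sqrt (by norm_num : (0:ℝ) ≤ 3)]
      have hadd : ((2:ℝ)^(i+1) * r)^2 = ((2:ℝ)^i * r)^2 + 3 * ((2:ℝ)^i * r)^2 := by ring
      rw [map_sub, h3, hadd, D.T_semigroup _ _ (by positivity) (by positivity)]
      rfl
    rw [hdiff]
    have hae := smooth_camp_bound hn hC₀ hc₀ D lam f hσ
    refine (lintegral_mul_le_of_ae_bound hWm hae).trans ?_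
    rw [← hKd, ← hv1d, ← hG2d, ← hCBd]
    calc (∫⁻ x, Wfn m x) * (CB * (K * ENNReal.ofReal (((2:ℝ)^i * r) ^ ((lam - (n:ℝ))/2))))
        ≤ (MW * ENNReal.ofReal (r ^ (((n:ℝ) - lam)/2))) *
          (CB * (K * ENNReal.ofReal (((2:ℝ)^i * r) ^ ((lam - (n:ℝ))/2)))) :=
          mul_le_mul_left hmolL1 _
      _ = MW * CB * ENNReal.ofReal ((2:ℝ)^(-(i:ℝ)*(((n:ℝ)-lam)/2))) * K := by
          rw [ralg5 hr (n:ℝ) lam i, ENNReal.ofReal_mul (by positivity)]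
          have hrr : ENNReal.ofReal (r ^ (((n:ℝ) - lam)/2)) *
              ENNReal.ofReal (r^((lam-(n:ℝ))/2)) = 1 := by
            rw [← ENNReal.ofReal_mul (by positivity), ← Real.rpow_add hr,
              show (((n:ℝ)-lam)/2 + (lam-(n:ℝ))/2) = 0 by ring, Real.rpow_zero,
              ENNReal.ofReal_one]
          calc (MW * ENNReal.ofReal (r ^ (((n:ℝ) - lam)/2))) *
              (CB * (K * (ENNReal.ofReal ((2:ℝ)^(-(i:ℝ)*(((n:ℝ)-lam)/2))) *
                ENNReal.ofReal (r^((lam-(n:ℝ))/2)))))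
              = (MW * CB * ENNReal.ofReal ((2:ℝ)^(-(i:ℝ)*(((n:ℝ)-lam)/2))) * K) *
                (ENNReal.ofReal (r ^ (((n:ℝ) - lam)/2)) *
                  ENNReal.ofReal (r^((lam-(n:ℝ))/2))) := by ring
            _ = MW * CB * ENNReal.ofReal ((2:ℝ)^(-(i:ℝ)*(((n:ℝ)-lam)/2))) * K := by
                rw [hrr, mul_one]
  -- L² norm of f is finite
  have hNft : (∫⁻ x : XX n, Wfn f x ^ 2) ≠ ⊤ := by
    have h := MeasureTheory.Lp.eLpNorm_lt_top f
    rw [eLpNorm_eq_lintegral_rpow_enorm_toReal (by norm_num) (by norm_num)] at h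
    simp only [enorm_eq_nnnorm] at h
    have hEq : (∫⁻ a : XX n, (‖(f : XX n → ℂ) a‖₊ : ℝ≥0∞) ^ ((2:ℝ≥0∞)).toReal) =
        ∫⁻ x : XX n, Wfn f x ^ 2 := by
      refine lintegral_congr fun x => ?_
      rw [show ((2:ℝ≥0∞)).toReal = ((2:ℕ):ℝ) by norm_num, ENNReal.rpow_natCast]
      rfl
    intro hcon
    rw [hEq, hcon, ENNReal.top_rpow_of_pos (by norm_num)] at h
    exact lt_irrefl _ h
  set Nf := (∫⁻ x : XX n, Wfn f x ^ 2) ^ ((1:ℝ)/2) with hNfd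
  have hNfh : Nf ≠ ⊤ := ENNReal.rpow_ne_top_of_nonneg (by norm_num) hNft
  set Cf : ℝ≥0∞ := (∫⁻ x, Wfn m x) * (ENNReal.ofReal C₀ * v1 ^ ((1:ℝ)/2) * G1 * Nf) with hCfd
  have hCft : Cf ≠ ⊤ :=
    ENNReal.mul_ne_top hJmt (ENNReal.mul_ne_top
      (ENNReal.mul_ne_top (ENNReal.mul_ne_top ENNReal.ofReal_ne_top hv1h) hG1t) hNfh)
  have htail_bound : ∀ N : ℕ,
      ENNReal.ofReal ‖∫ x, ((D.T (((2:ℝ)^N * r)^2) f : HH n) : XX n → ℂ) x *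
        (starRingEnd ℂ) ((m : XX n → ℂ) x)‖ ≤
      Cf * ENNReal.ofReal (((2:ℝ)^N * r) ^ (-(n:ℝ)/2)) := by
    intro N
    have hσ : (0:ℝ) < (2:ℝ)^N * r := by positivity
    have hae := smooth_global_bound hn hC₀ hc₀ D f hσ
    refine (pairing_le m _).trans ?_
    refine (lintegral_mul_le_of_ae_bound hWm hae).trans (le_of_eq ?_)
    rw [hCfd, ← hv1d, ← hG1d, ← hNfd]
    ring
  -- telescoping induction
  set P : HH n → ℝ≥0∞ := fun u =>
    ENNReal.ofReal ‖∫ x, (u : XX n → ℂ) x * (starRingEnd ℂ) ((m : XX n → ℂ) x)‖ with hPd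
  have hind : ∀ N : ℕ, P f ≤
      ENNReal.ofReal ((2:ℝ)^((n:ℝ)/2)) * SA * K +
      MW * CB * K * (∑ i ∈ Finset.range N, ENNReal.ofReal ((2:ℝ)^(-(i:ℝ)*(((n:ℝ)-lam)/2)))) +
      P (D.T (((2:ℝ)^N * r)^2) f) := by
    intro N
    induction N with
    | zero =>
      have h0 : ((2:ℝ)^(0:ℕ) * r) = r := by norm_num
      rw [h0]
      calc P f ≤ (∫⁻ x, Wfn m x * Wfn (f - D.T (r^2) f) x) + P (D.T (r^2) f) :=
            pairing_split m f _
        _ ≤ ENNReal.ofReal ((2:ℝ)^((n:ℝ)/2)) * SA * K + P (D.T (r^2) f) :=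
            add_le_add_left hTermA _
        _ = ENNReal.ofReal ((2:ℝ)^((n:ℝ)/2)) * SA * K +
            MW * CB * K * (∑ i ∈ Finset.range 0,
              ENNReal.ofReal ((2:ℝ)^(-(i:ℝ)*(((n:ℝ)-lam)/2)))) + P (D.T (r^2) f) := by
            rw [Finset.range_zero, Finset.sum_empty, mul_zero, add_zero]
    | succ N ih =>
      calc P f ≤ ENNReal.ofReal ((2:ℝ)^((n:ℝ)/2)) * SA * K +
            MW * CB * K * (∑ i ∈ Finset.range N,
              ENNReal.ofReal ((2:ℝ)^(-(i:ℝ)*(((n:ℝ)-lam)/2)))) +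
            P (D.T (((2:ℝ)^N * r)^2) f) := ih
        _ ≤ ENNReal.ofReal ((2:ℝ)^((n:ℝ)/2)) * SA * K +
            MW * CB * K * (∑ i ∈ Finset.range N,
              ENNReal.ofReal ((2:ℝ)^(-(i:ℝ)*(((n:ℝ)-lam)/2)))) +
            ((∫⁻ x, Wfn m x *
              Wfn (D.T (((2:ℝ)^N * r)^2) f - D.T (((2:ℝ)^(N+1) * r)^2) f) x) +
             P (D.T (((2:ℝ)^(N+1) * r)^2) f)) :=
            add_le_add_right (pairing_split m _ _) _
        _ ≤ ENNReal.ofReal ((2:ℝ)^((n:ℝ)/2)) * SA * K +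
            MW * CB * K * (∑ i ∈ Finset.range N,
              ENNReal.ofReal ((2:ℝ)^(-(i:ℝ)*(((n:ℝ)-lam)/2)))) +
            ((MW * CB * ENNReal.ofReal ((2:ℝ)^(-(N:ℝ)*(((n:ℝ)-lam)/2))) * K) +
             P (D.T (((2:ℝ)^(N+1) * r)^2) f)) :=
            add_le_add_right (add_le_add_left (hTermB N) _) _
        _ = ENNReal.ofReal ((2:ℝ)^((n:ℝ)/2)) * SA * K +
            MW * CB * K * (∑ i ∈ Finset.range (N+1),
              ENNReal.ofReal ((2:ℝ)^(-(i:ℝ)*(((n:ℝ)-lam)/2)))) +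
            P (D.T (((2:ℝ)^(N+1) * r)^2) f) := by
            rw [Finset.sum_range_succ]
            ring
  have hB : ∀ N : ℕ, P f ≤ E * K + P (D.T (((2:ℝ)^N * r)^2) f) := by
    intro N
    refine (hind N).trans (add_le_add ?_ le_rfl)
    calc ENNReal.ofReal ((2:ℝ)^((n:ℝ)/2)) * SA * K +
        MW * CB * K * (∑ i ∈ Finset.range N,
          ENNReal.ofReal ((2:ℝ)^(-(i:ℝ)*(((n:ℝ)-lam)/2))))
        ≤ ENNReal.ofReal ((2:ℝ)^((n:ℝ)/2)) * SA * K + MW * CB * K * SB :=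
          add_le_add_right (mul_le_mul_right (ENNReal.sum_le_tsum _) _) _
      _ = E * K := by rw [hEd]; ring
  have htend : Tendsto (fun N : ℕ => P (D.T (((2:ℝ)^N * r)^2) f)) atTop (𝓝 0) := by
    have h1 : Tendsto (fun N : ℕ => ((2:ℝ)^N * r)) atTop atTop :=
      (tendsto_pow_atTop_atTop_of_one_lt (by norm_num : (1:ℝ) < 2)).atTop_mul_const hr
    have h2 : Tendsto (fun x : ℝ => x ^ (-(n:ℝ)/2)) atTop (𝓝 0) := by
      rw [show -(n:ℝ)/2 = -((n:ℝ)/2) by ring]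
      have hn2 : (0:ℝ) < (n:ℝ)/2 := by
        have : (0:ℝ) < (n:ℝ) := by exact_mod_cast hn
        positivity
      exact tendsto_rpow_neg_atTop hn2
    have h3 : Tendsto (fun N : ℕ => ENNReal.ofReal (((2:ℝ)^N * r) ^ (-(n:ℝ)/2)))
        atTop (𝓝 0) := by
      have h4 := ENNReal.tendsto_ofReal (h2.comp h1)
      simpa using h4
    have h5 : Tendsto (fun N : ℕ => Cf * ENNReal.ofReal (((2:ℝ)^N * r) ^ (-(n:ℝ)/2)))
        atTop (𝓝 0) := by
      have h6 := ENNReal.Tendsto.const_mul h3 (Or.inr hCft)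
      simpa using h6
    exact tendsto_of_tendsto_of_tendsto_of_le_of_le tendsto_const_nhds h5
      (fun N => zero_le) htail_bound
  have hseq : Tendsto (fun N : ℕ => E * K + P (D.T (((2:ℝ)^N * r)^2) f)) atTop (𝓝 (E * K)) := by
    have hconst : Tendsto (fun _ : ℕ => E * K) atTop (𝓝 (E * K)) := tendsto_const_nhds
    simpa using hconst.add htend
  exact ge_of_tendsto' hseq hB
end
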